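/- arXiv:2106.07621 — 10 statements merged into one kernel-verified Lean document; each statement's English description precedes it below -/
import Mathlib

section
/- Let f be a polynomial with rational coefficients of degree d. Then for every nonzero rational x and every rational n, writing g(t) = f(x·t), one has S_f(n) = x·S_g(n/x) + ∑_{r=1}^{d+1} (F_r(x)/r!) · (Δ_x^{r-1} f(n) − Δ_x^{r-1} f(0)) / x^{r-1}. (All terms with r > d+1 vanish since the iterated differences of f of order exceeding d are zero.) -/
/-- The power series `D(z) = ∑_{r≥0} d_r z^r` over `ℚ[x]` with
`d_r = (∏_{j=1}^{r} (1 - j·x))/(r+1)!`, i.e. the power series of `((1+xz)^{1/x} - 1)/z`. -/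
noncomputable def Dser : PowerSeries (Polynomial ℚ) :=
  PowerSeries.mk fun r =>
    Polynomial.C ((1 : ℚ) / (Nat.factorial (r + 1))) *
      ∏ j ∈ Finset.range r, (1 - Polynomial.C ((j : ℚ) + 1) * Polynomial.X)

/-- The exponential generating function `∑_{r≥0} (F_r/r!) z^r` of a sequence of polynomials. -/
noncomputable def egf (F : ℕ → Polynomial ℚ) : PowerSeries (Polynomial ℚ) :=
  PowerSeries.mk fun r => Polynomial.C ((1 : ℚ) / (Nat.factorial r)) * F r

/-- The forward difference operator with step size `x`: `Δ_x f(t) = f(t+x) - f(t)`. -/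
noncomputable def fdiff (x : ℚ) (p : Polynomial ℚ) : Polynomial ℚ :=
  p.comp (Polynomial.X + Polynomial.C x) - p

open Polynomial Finset

lemma fdiff_add (x : ℚ) (p q : ℚ[X]) : fdiff x (p + q) = fdiff x p + fdiff x q := by
  simp [fdiff]; ring

lemma fdiff_C_mul (x a : ℚ) (p : ℚ[X]) : fdiff x (C a * p) = C a * fdiff x p := by
  simp [fdiff, mul_sub]

lemma fdiff_C (x a : ℚ) : fdiff x (C a) = 0 := by simp [fdiff]

lemma fdiff_zero (x : ℚ) : fdiff x 0 = 0 := by simp [fdiff]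

lemma fdiff_sub_C (x a : ℚ) (p : ℚ[X]) : fdiff x (p - C a) = fdiff x p := by
  simp [fdiff]

lemma fdiff_iter_C_mul (x a : ℚ) (r : ℕ) (p : ℚ[X]) :
    (fdiff x)^[r] (C a * p) = C a * (fdiff x)^[r] p := by
  induction r generalizing p with
  | zero => simp
  | succ r ih => simp [Function.iterate_succ_apply, fdiff_C_mul, ih]

lemma fdiff_iter_add (x : ℚ) (r : ℕ) (p q : ℚ[X]) :
    (fdiff x)^[r] (p + q) = (fdiff x)^[r] p + (fdiff x)^[r] q := by
  induction r generalizing p q with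
  | zero => simp
  | succ r ih => simp [Function.iterate_succ_apply, fdiff_add, ih]

lemma fdiff_iter_zero (x : ℚ) (r : ℕ) : (fdiff x)^[r] (0 : ℚ[X]) = 0 :=
  Function.iterate_fixed (fdiff_zero x) r

lemma fdiff_comm (x y : ℚ) (p : ℚ[X]) : fdiff y (fdiff x p) = fdiff x (fdiff y p) := by
  simp only [fdiff, sub_comp, comp_assoc, add_comp, X_comp, C_comp]
  ring_nf

lemma fdiff_iter_comm (x y : ℚ) (r : ℕ) (p : ℚ[X]) :
    fdiff y ((fdiff x)^[r] p) = (fdiff x)^[r] (fdiff y p) := by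
  induction r generalizing p with
  | zero => simp
  | succ r ih => rw [Function.iterate_succ_apply, Function.iterate_succ_apply, ih, fdiff_comm]

lemma fdiff_coeff_tail (x : ℚ) (p : ℚ[X]) (m : ℕ) (hm : p.natDegree ≤ m) :
    (fdiff x p).coeff m = 0 := by
  have hcomp : p.comp (X + C x) = taylor x p := (taylor_apply x p).symm
  rcases eq_or_lt_of_le hm with h | h
  · have hh : hasseDeriv m p = C (p.coeff m) := by
      ext j
      rcases Nat.eq_zero_or_pos j with rfl | hj
      · simp [hasseDeriv_coeff]
      · rw [hasseDeriv_coeff]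
        have : p.coeff (j + m) = 0 := coeff_eq_zero_of_natDegree_lt (by omega)
        simp [this, coeff_C, hj.ne']
    simp [fdiff, hcomp, taylor_coeff, hh]
  · have h1 : (taylor x p).coeff m = 0 := by
      rw [taylor_coeff, hasseDeriv_eq_zero_of_lt_natDegree p m h]; simp
    have h2 : p.coeff m = 0 := coeff_eq_zero_of_natDegree_lt h
    simp [fdiff, hcomp, h1, h2]

lemma fdiff_natDegree_le (x : ℚ) (p : ℚ[X]) (n : ℕ) (hp : p.natDegree ≤ n + 1) :
    (fdiff x p).natDegree ≤ n := by
  rw [natDegree_le_iff_coeff_eq_zero]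
  intro m hm
  exact fdiff_coeff_tail x p m (by omega)

lemma fdiff_iter_eq_zero (x : ℚ) (n : ℕ) (p : ℚ[X]) (hp : p.natDegree ≤ n) :
    (fdiff x)^[n + 1] p = 0 := by
  induction n generalizing p with
  | zero =>
    have : fdiff x p = 0 := by
      rw [Polynomial.eq_C_of_natDegree_le_zero hp]; exact fdiff_C x _
    simp [this]
  | succ n ih =>
    rw [Function.iterate_succ_apply]
    exact ih _ (fdiff_natDegree_le x p n hp)

lemma fdiff_eq_zero_const (x : ℚ) (hx : x ≠ 0) (q : ℚ[X]) (h : fdiff x q = 0) :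
    q = C (q.eval 0) := by
  have key : ∀ k : ℕ, q.eval ((k : ℚ) * x) = q.eval 0 := by
    intro k
    induction k with
    | zero => simp
    | succ k ih =>
      have hc : q.comp (X + C x) = q := by
        have := sub_eq_zero.mp h; exact this
      have := congrArg (Polynomial.eval ((k : ℚ) * x)) hc
      rw [eval_comp] at this
      simp only [eval_add, eval_X, eval_C] at this
      rw [← ih, ← this]; push_cast; ring_nf
  by_contra hne
  have hroots : {y : ℚ | IsRoot (q - C (q.eval 0)) y}.Infinite := by
    apply Set.Infinite.mono (s := Set.range (fun k : ℕ => (k : ℚ) * x))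
    · rintro y ⟨k, rfl⟩
      simp [IsRoot, key k]
    · exact Set.infinite_range_of_injective (fun a b hab => by
        have : (a : ℚ) = b := by
          exact mul_right_cancel₀ hx hab
        exact_mod_cast this)
  have := Polynomial.eq_zero_of_infinite_isRoot _ hroots
  rw [sub_eq_zero] at this
  exact hne this

noncomputable def nb (x : ℚ) (m : ℕ) : ℚ[X] :=
  ∏ i ∈ Finset.range m, (X - C ((i : ℚ) * x))

lemma nb_monic (x : ℚ) (m : ℕ) : (nb x m).Monic :=
  monic_prod_of_monic _ _ fun i _ => monic_X_sub_C _

lemma nb_natDegree (x : ℚ) (m : ℕ) : (nb x m).natDegree = m := by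
  have := natDegree_prod_of_monic (Finset.range m)
    (fun i => (X : ℚ[X]) - C ((i:ℚ)*x)) (fun i _ => monic_X_sub_C _)
  rw [nb, this]
  simp only [natDegree_X_sub_C, Finset.sum_const, smul_eq_mul, mul_one, Finset.card_range]

lemma nb_eval_zero (x : ℚ) (m : ℕ) (hm : 1 ≤ m) : (nb x m).eval 0 = 0 := by
  rw [nb, eval_prod]
  apply Finset.prod_eq_zero (Finset.mem_range.mpr (by omega : 0 < m))
  simp

lemma fdiff_nb (x : ℚ) (m : ℕ) : fdiff x (nb x (m + 1)) = C (((m : ℚ) + 1) * x) * nb x m := by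
  have hcomp : (nb x (m + 1)).comp (X + C x) = (X + C x) * nb x m := by
    rw [nb, Polynomial.prod_comp, Finset.prod_range_succ']
    conv_rhs => rw [mul_comm]
    congr 1
    · unfold nb
      apply Finset.prod_congr rfl
      intro i _
      simp only [sub_comp, add_comp, X_comp, C_comp, Nat.cast_add, Nat.cast_one, add_mul, one_mul,
        C_add]
      ring
    · simp
  have hsplit : nb x (m + 1) = nb x m * (X - C ((m : ℚ) * x)) := by
    rw [nb, nb, Finset.prod_range_succ]
  rw [fdiff, hcomp, hsplit]
  simp only [C_mul, C_add, C_1]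
  ring

lemma prod_range_cast_factorial (r : ℕ) :
    ∏ j ∈ Finset.range r, ((r : ℚ) - j) = (Nat.factorial r : ℚ) := by
  induction r with
  | zero => simp
  | succ r ih =>
    rw [Finset.prod_range_succ']
    have h : ∏ j ∈ Finset.range r, ((((r:ℕ) + 1 : ℕ) : ℚ) - ((j + 1 : ℕ) : ℚ)) =
        ∏ j ∈ Finset.range r, ((r : ℚ) - j) := by
      apply Finset.prod_congr rfl; intro j _; push_cast; ring
    rw [h, ih, Nat.factorial_succ]
    push_cast
    ring

lemma fdiff_iter_nb (x : ℚ) (r m : ℕ) :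
    (fdiff x)^[r] (nb x (m + r)) =
      C ((∏ j ∈ Finset.range r, ((m : ℚ) + r - j)) * x ^ r) * nb x m := by
  induction r generalizing m with
  | zero => simp
  | succ r ih =>
    have h1 : m + (r + 1) = (m + 1) + r := by omega
    rw [Function.iterate_succ_apply', h1, ih (m + 1), fdiff_C_mul, fdiff_nb,
      ← mul_assoc, ← C_mul]
    congr 2
    rw [Finset.prod_range_succ]
    have h : ∏ j ∈ Finset.range r, ((m : ℚ) + ((r:ℕ) + 1 : ℕ) - j) =
        ∏ j ∈ Finset.range r, (((m:ℕ) + 1 : ℕ) + (r : ℚ) - j) := by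
      apply Finset.prod_congr rfl; intro j _; push_cast; ring
    rw [h]
    push_cast
    ring

noncomputable def dcoef (x : ℚ) (s : ℕ) : ℚ :=
  (∏ j ∈ Finset.range s, (1 - ((j : ℚ) + 1) * x)) / (Nat.factorial (s + 1))

lemma fdiff_sub (x : ℚ) (p q : Polynomial ℚ) : fdiff x (p - q) = fdiff x p - fdiff x q := by
  simp [fdiff]; ring

lemma fdiff_iter_C (x a : ℚ) (s : ℕ) : (fdiff x)^[s + 1] (C a) = 0 := by
  rw [Function.iterate_succ_apply, fdiff_C, fdiff_iter_zero]

lemma nb_eval_one (x : ℚ) (n : ℕ) :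
    (nb x (n + 1)).eval 1 = ∏ j ∈ Finset.range n, (1 - ((j : ℚ) + 1) * x) := by
  rw [nb, eval_prod, Finset.prod_range_succ']
  simp only [eval_sub, eval_X, eval_C, Nat.cast_zero, zero_mul, sub_zero, mul_one]
  apply Finset.prod_congr rfl
  intro j _
  push_cast
  ring

lemma fdiff_iter_nb_eval_zero_top (x : ℚ) (n : ℕ) :
    ((fdiff x)^[n + 1] (nb x (n + 1))).eval 0 = (Nat.factorial (n + 1) : ℚ) * x ^ (n + 1) := by
  have h := fdiff_iter_nb x (n + 1) 0
  simp only [Nat.zero_add] at h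
  rw [h, show nb x 0 = 1 from by simp [nb], mul_one, eval_C]
  congr 1
  rw [← prod_range_cast_factorial (n + 1)]
  apply Finset.prod_congr rfl
  intro j _
  push_cast
  ring

lemma fdiff_finset_sum {ι : Type*} (x : ℚ) (t : Finset ι) (g : ι → Polynomial ℚ) :
    fdiff x (∑ i ∈ t, g i) = ∑ i ∈ t, fdiff x (g i) := by
  classical
  induction t using Finset.induction_on with
  | empty => simp [fdiff]
  | insert _ _ h ih => rw [Finset.sum_insert h, Finset.sum_insert h, fdiff_add, ih]

lemma fdiff_iter_succ_inner (x : ℚ) (k : ℕ) (q : Polynomial ℚ) :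
    fdiff x ((fdiff x)^[k] q) = (fdiff x)^[k] (fdiff x q) := by
  rw [← Function.iterate_succ_apply' (fdiff x) k q, Function.iterate_succ_apply]

lemma fdiff_sum_ext (x : ℚ) (c : ℕ → ℚ) (q : Polynomial ℚ) (M N : ℕ)
    (hq : q.natDegree ≤ M) (hMN : M ≤ N) :
    ∑ s ∈ Finset.range N, C (c s) * (fdiff x)^[s + 1] q =
      ∑ s ∈ Finset.range M, C (c s) * (fdiff x)^[s + 1] q := by
  symm
  apply Finset.sum_subset (Finset.range_subset_range.mpr hMN)
  intro s _ hs
  have hMs : M ≤ s := by simpa using hs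
  rw [fdiff_iter_eq_zero x s q (le_trans hq hMs), mul_zero]

lemma KI_nb (x : ℚ) (hx : x ≠ 0) (n : ℕ)
    (ih : ∀ p : Polynomial ℚ, p.natDegree ≤ n → ∀ N, n ≤ N →
      fdiff 1 p = ∑ s ∈ Finset.range N, C (dcoef x s / x ^ (s + 1)) * (fdiff x)^[s + 1] p) :
    fdiff 1 (nb x (n + 1)) =
      ∑ s ∈ Finset.range (n + 1), C (dcoef x s / x ^ (s + 1)) * (fdiff x)^[s + 1] (nb x (n + 1)) := by
  set b := nb x (n + 1) with hb
  set Dfn := fdiff 1 b -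
    ∑ s ∈ Finset.range (n + 1), C (dcoef x s / x ^ (s + 1)) * (fdiff x)^[s + 1] b with hD
  have hfb : fdiff x b = C (((n : ℚ) + 1) * x) * nb x n := fdiff_nb x n
  have hconst : fdiff x Dfn = 0 := by
    rw [hD, fdiff_sub, fdiff_finset_sum]
    have h1 : fdiff x (fdiff 1 b) = C (((n : ℚ) + 1) * x) * fdiff 1 (nb x n) := by
      rw [fdiff_comm 1 x b, hfb, fdiff_C_mul]
    have h2 : ∀ s, fdiff x (C (dcoef x s / x ^ (s + 1)) * (fdiff x)^[s + 1] b) =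
        C (((n : ℚ) + 1) * x) * (C (dcoef x s / x ^ (s + 1)) * (fdiff x)^[s + 1] (nb x n)) := by
      intro s
      rw [fdiff_C_mul, fdiff_iter_succ_inner, hfb, fdiff_iter_C_mul]
      ring
    rw [h1, Finset.sum_congr rfl fun s _ => h2 s, ← Finset.mul_sum,
      ih (nb x n) (le_of_eq (nb_natDegree x n)) (n + 1) (by omega)]
    ring
  have hDc : Dfn = C (Dfn.eval 0) := fdiff_eq_zero_const x hx Dfn hconst
  have heval : Dfn.eval 0 = 0 := by
    have hsum : (∑ s ∈ Finset.range (n + 1),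
        C (dcoef x s / x ^ (s + 1)) * (fdiff x)^[s + 1] b).eval 0 =
        dcoef x n * (Nat.factorial (n + 1) : ℚ) := by
      rw [eval_finset_sum]
      rw [Finset.sum_eq_single n]
      · rw [eval_mul, eval_C, hb, fdiff_iter_nb_eval_zero_top]
        field_simp
      · intro s hs hsne
        have hslt : s < n := by
          have := Finset.mem_range.mp hs; omega
        have hsplit : (n - s) + (s + 1) = n + 1 := by omega
        have h := fdiff_iter_nb x (s + 1) (n - s)
        rw [hsplit] at h
        rw [eval_mul, eval_C, hb, h, eval_mul, nb_eval_zero x (n - s) (by omega), mul_zero, mul_zero]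
      · intro hn
        exact absurd (Finset.mem_range.mpr (by omega)) hn
    have hfd : (fdiff 1 b).eval 0 = ∏ j ∈ Finset.range n, (1 - ((j : ℚ) + 1) * x) := by
      rw [fdiff, eval_sub, eval_comp]
      simp only [eval_add, eval_X, eval_C, zero_add]
      rw [hb, nb_eval_one, nb_eval_zero x (n + 1) (by omega), sub_zero]
    rw [hD, eval_sub, hfd, hsum, dcoef]
    have : (Nat.factorial (n + 1) : ℚ) ≠ 0 := by positivity
    field_simp
    rw [sub_eq_zero]; exact Finset.prod_congr rfl fun j _ => by ring
  rw [heval] at hDc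
  have : Dfn = 0 := by rw [hDc, map_zero]
  rw [hD] at this
  exact sub_eq_zero.mp this

lemma KI (x : ℚ) (hx : x ≠ 0) : ∀ n : ℕ, ∀ p : Polynomial ℚ, p.natDegree ≤ n → ∀ N, n ≤ N →
    fdiff 1 p = ∑ s ∈ Finset.range N, C (dcoef x s / x ^ (s + 1)) * (fdiff x)^[s + 1] p := by
  intro n
  induction n with
  | zero =>
    intro p hp N _
    rw [Polynomial.eq_C_of_natDegree_le_zero hp]
    simp [fdiff_C, fdiff_iter_C]
  | succ n ih =>
    intro p hp N hN
    by_cases hple : p.natDegree ≤ n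
    · exact ih p hple N (by omega)
    · set a := p.leadingCoeff with ha
      set r := p - C a * nb x (n + 1) with hr
      have hpd : p.natDegree = n + 1 := by omega
      have hrd : r.natDegree ≤ n := by
        rw [natDegree_le_iff_coeff_eq_zero]
        intro m hm
        by_cases hm1 : m = n + 1
        · subst hm1
          rw [hr, coeff_sub, coeff_C_mul]
          have h1 : (nb x (n + 1)).coeff (n + 1) = 1 := by
            have := (nb_monic x (n + 1)).coeff_natDegree
            rwa [nb_natDegree] at this
          have h2 : p.coeff (n + 1) = a := by
            rw [ha, Polynomial.leadingCoeff, hpd]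
          rw [h1, h2, mul_one, sub_self]
        · rw [hr, coeff_sub, coeff_C_mul]
          rw [coeff_eq_zero_of_natDegree_lt (by omega),
            coeff_eq_zero_of_natDegree_lt (by rw [nb_natDegree]; omega), mul_zero, sub_zero]
      have hpdecomp : p = C a * nb x (n + 1) + r := by rw [hr]; ring
      have hbN : fdiff 1 (nb x (n + 1)) =
          ∑ s ∈ Finset.range N, C (dcoef x s / x ^ (s + 1)) * (fdiff x)^[s + 1] (nb x (n + 1)) := by
        rw [fdiff_sum_ext x _ (nb x (n + 1)) (n + 1) N (le_of_eq (nb_natDegree x (n + 1))) (by omega)]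
        exact KI_nb x hx n ih
      have hrN := ih r hrd N (by omega)
      calc fdiff 1 p = C a * fdiff 1 (nb x (n + 1)) + fdiff 1 r := by
            rw [hpdecomp, fdiff_add, fdiff_C_mul]
        _ = ∑ s ∈ Finset.range N, C (dcoef x s / x ^ (s + 1)) * (fdiff x)^[s + 1] p := by
            rw [hbN, hrN, hpdecomp, Finset.mul_sum, ← Finset.sum_add_distrib]
            apply Finset.sum_congr rfl
            intro s _
            rw [fdiff_iter_add, fdiff_iter_C_mul]
            ring

lemma conv_lemma (F : ℕ → Polynomial ℚ) (hF : egf F * Dser = 1) (x : ℚ) (m : ℕ) :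
    ∑ ij ∈ HasAntidiagonal.antidiagonal m,
      dcoef x ij.1 * ((F ij.2).eval x / (Nat.factorial ij.2 : ℚ)) =
      if m = 0 then 1 else 0 := by
  have hF' : Dser * egf F = 1 := by rw [mul_comm]; exact hF
  have h := congrArg (PowerSeries.coeff (R := Polynomial ℚ) m) hF'
  rw [PowerSeries.coeff_mul, PowerSeries.coeff_one] at h
  have h2 := congrArg (Polynomial.eval x) h
  rw [Polynomial.eval_finset_sum, apply_ite (Polynomial.eval x), eval_one, eval_zero] at h2
  rw [← h2]
  apply Finset.sum_congr rfl
  intro ij _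
  simp only [Dser, egf, PowerSeries.coeff_mk, eval_mul, eval_C, eval_prod, eval_sub, eval_one,
    eval_mul, eval_X, dcoef]
  ring

lemma sq_sum {M : Type*} [AddCommMonoid M] (g : ℕ → ℕ → M) (K M1 M2 : ℕ)
    (h0 : ∀ s r, K ≤ s + r → g s r = 0) (h1 : K ≤ M1) (h2 : K ≤ M2) :
    ∑ s ∈ Finset.range M1, ∑ r ∈ Finset.range M2, g s r =
      ∑ m ∈ Finset.range K, ∑ ij ∈ HasAntidiagonal.antidiagonal m, g ij.1 ij.2 := by
  classical
  rw [← Finset.sum_product']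
  have hdisj : (↑(Finset.range K) : Set ℕ).PairwiseDisjoint
      (fun m => (HasAntidiagonal.antidiagonal m : Finset (ℕ × ℕ))) := by
    intro a _ b _ hab
    simp only [Function.onFun]
    rw [Finset.disjoint_left]
    intro p hp hq
    rw [HasAntidiagonal.mem_antidiagonal] at hp hq
    exact hab (hp ▸ hq)
  rw [← Finset.sum_biUnion hdisj]
  symm
  apply Finset.sum_subset
  · intro p hp
    rw [Finset.mem_biUnion] at hp
    obtain ⟨m, hm, hpm⟩ := hp
    rw [HasAntidiagonal.mem_antidiagonal] at hpm
    rw [Finset.mem_range] at hm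
    rw [Finset.mem_product, Finset.mem_range, Finset.mem_range]
    omega
  · intro p _ hp
    apply h0
    by_contra hlt
    push_neg at hlt
    exact hp (Finset.mem_biUnion.mpr ⟨p.1 + p.2, Finset.mem_range.mpr hlt,
      HasAntidiagonal.mem_antidiagonal.mpr rfl⟩)

lemma S_unique (P : Polynomial ℚ) (h : P.comp (X + 1) - P = 0) (h0 : P.eval 0 = 0) : P = 0 := by
  have hfd : fdiff 1 P = 0 := by
    rw [fdiff, ← h, C_1]
  have := fdiff_eq_zero_const 1 one_ne_zero P hfd
  rw [h0, map_zero] at this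
  exact this

lemma fdiff_iter_finset_sum {ι : Type*} (x : ℚ) (k : ℕ) (t : Finset ι) (g : ι → Polynomial ℚ) :
    (fdiff x)^[k] (∑ i ∈ t, g i) = ∑ i ∈ t, (fdiff x)^[k] (g i) := by
  classical
  induction t using Finset.induction_on with
  | empty => simp [fdiff_iter_zero]
  | insert _ _ h ih => rw [Finset.sum_insert h, Finset.sum_insert h, fdiff_iter_add, ih]

/-- **Generalized summation formula** (Theorem 2.1): for a polynomial `f` of degree `d`,
`∑_{k=0}^{n-1} f(k) = x ∑_{k=0}^{n/x-1} f(kx)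
  + ∑_{r=1}^{d+1} (F_r(x)/r!) (Δ_x^{r-1} f(n) - Δ_x^{r-1} f(0)) / x^{r-1}`,
where `S` is the fractional sum of `f`, `Sg` is the fractional sum of `g(t) = f(x·t)`,
and `F_r` is the unique sequence of polynomials with `(∑ (F_r/r!) z^r) · D(z) = 1`. -/
theorem generalized_summation_formula
    (F : ℕ → Polynomial ℚ) (hF : egf F * Dser = 1)
    (f : Polynomial ℚ) (d : ℕ) (hd : f.natDegree = d)
    (x : ℚ) (hx : x ≠ 0) (n : ℚ)
    (S : Polynomial ℚ) (hS0 : S.eval 0 = 0)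
    (hS : S.comp (Polynomial.X + 1) - S = f)
    (Sg : Polynomial ℚ) (hSg0 : Sg.eval 0 = 0)
    (hSg : Sg.comp (Polynomial.X + 1) - Sg = f.comp (Polynomial.C x * Polynomial.X)) :
    S.eval n = x * Sg.eval (n / x) +
      ∑ r ∈ Finset.Icc 1 (d + 1),
        (F r).eval x / (Nat.factorial r : ℚ) *
          (((fdiff x)^[r - 1] f).eval n - ((fdiff x)^[r - 1] f).eval 0) / x ^ (r - 1) := by
  set e : ℕ → ℚ := fun k => (F k).eval x / (Nat.factorial k : ℚ) with he
  have he0 : e 0 = 1 := by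
    have h := conv_lemma F hF x 0
    rw [Finset.Nat.antidiagonal_zero, Finset.sum_singleton, if_pos rfl] at h
    simpa [dcoef, he] using h
  set T : Polynomial ℚ := C x * Sg.comp (C x⁻¹ * X) +
      ∑ r ∈ Finset.Icc 1 (d + 1),
        C (e r / x ^ (r - 1)) * ((fdiff x)^[r - 1] f - C (((fdiff x)^[r - 1] f).eval 0))
    with hT
  have hT0 : T.eval 0 = 0 := by
    have h1 : (C x * Sg.comp (C x⁻¹ * X)).eval 0 = 0 := by simp [hSg0]
    have h2 : Polynomial.eval 0 (∑ r ∈ Finset.Icc 1 (d + 1),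
        C (e r / x ^ (r - 1)) * ((fdiff x)^[r - 1] f - C (((fdiff x)^[r - 1] f).eval 0))) = 0 := by
      rw [eval_finset_sum]
      apply Finset.sum_eq_zero
      intro r _
      simp
    rw [hT, eval_add, h1, h2, add_zero]
  have hG : fdiff x (C x * Sg.comp (C x⁻¹ * X)) = C x * f := by
    rw [fdiff_C_mul]
    congr 1
    rw [fdiff]
    have hcomp : (Sg.comp (C x⁻¹ * X)).comp (X + C x) = (Sg.comp (X + 1)).comp (C x⁻¹ * X) := by
      rw [comp_assoc, comp_assoc]
      congr 1
      rw [mul_comp, C_comp, X_comp, add_comp, X_comp, one_comp]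
      rw [mul_add, ← C_mul, inv_mul_cancel₀ hx, C_1]
    rw [hcomp, ← sub_comp, hSg, comp_assoc, mul_comp, C_comp, X_comp, ← mul_assoc, ← C_mul,
      mul_inv_cancel₀ hx, C_1, one_mul, comp_X]
  have hfdT : fdiff x T = C x * f +
      ∑ r ∈ Finset.Icc 1 (d + 1), C (e r / x ^ (r - 1)) * (fdiff x)^[r] f := by
    rw [hT, fdiff_add, hG, fdiff_finset_sum]
    congr 1
    apply Finset.sum_congr rfl
    intro r hr
    rw [fdiff_C_mul, fdiff_sub_C]
    congr 1
    rw [← Function.iterate_succ_apply' (fdiff x) (r - 1) f,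
      show (r - 1).succ = r from by have := (Finset.mem_Icc.mp hr).1; omega]
  have hiter : ∀ s, (fdiff x)^[s + 1] T =
      C x * (fdiff x)^[s] f +
        ∑ r ∈ Finset.Icc 1 (d + 1), C (e r / x ^ (r - 1)) * (fdiff x)^[s + r] f := by
    intro s
    rw [Function.iterate_succ_apply, hfdT, fdiff_iter_add, fdiff_iter_C_mul,
      fdiff_iter_finset_sum]
    congr 1
    apply Finset.sum_congr rfl
    intro r _
    rw [fdiff_iter_C_mul, ← Function.iterate_add_apply]
  have hins : Finset.range (d + 2) = insert 0 (Finset.Icc 1 (d + 1)) := by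
    ext a
    simp only [Finset.mem_range, Finset.mem_insert, Finset.mem_Icc]
    omega
  have h0notin : (0 : ℕ) ∉ Finset.Icc 1 (d + 1) := by simp
  have hstep : ∀ s, C (dcoef x s / x ^ (s + 1)) * (fdiff x)^[s + 1] T =
      ∑ r ∈ Finset.range (d + 2), C (dcoef x s * e r / x ^ (s + r)) * (fdiff x)^[s + r] f := by
    intro s
    rw [hiter s, hins, Finset.sum_insert h0notin, mul_add, Finset.mul_sum]
    congr 1
    · rw [← mul_assoc, ← C_mul, he0, Nat.add_zero]
      congr 2
      rw [pow_succ]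
      field_simp
      ring
    · apply Finset.sum_congr rfl
      intro r hr
      have hr1 : 1 ≤ r := (Finset.mem_Icc.mp hr).1
      rw [← mul_assoc, ← C_mul]
      congr 2
      rw [div_mul_div_comm, ← pow_add, show s + 1 + (r - 1) = s + r from by omega]
  set N := max T.natDegree (d + 1) with hN
  have hKI := KI x hx N T (le_max_left _ _) N le_rfl
  have hmain : fdiff 1 T = f := by
    rw [hKI, Finset.sum_congr rfl fun s _ => hstep s,
      sq_sum (fun s r => C (dcoef x s * e r / x ^ (s + r)) * (fdiff x)^[s + r] f) (d + 1) N (d + 2)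
        (by
          intro s r hsr
          have hz : (fdiff x)^[s + r] f = 0 := by
            rw [show s + r = (s + r - 1) + 1 from by omega]
            exact fdiff_iter_eq_zero x (s + r - 1) f (by omega)
          simp [hz])
        (le_max_right _ _) (by omega)]
    have hin : ∀ m, (∑ ij ∈ HasAntidiagonal.antidiagonal m,
        C (dcoef x ij.1 * e ij.2 / x ^ (ij.1 + ij.2)) * (fdiff x)^[ij.1 + ij.2] f) =
        C ((if m = 0 then (1 : ℚ) else 0) / x ^ m) * (fdiff x)^[m] f := by
      intro m
      have hc : ∀ ij ∈ HasAntidiagonal.antidiagonal m,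
          C (dcoef x ij.1 * e ij.2 / x ^ (ij.1 + ij.2)) * (fdiff x)^[ij.1 + ij.2] f =
          C (dcoef x ij.1 * e ij.2 / x ^ m) * (fdiff x)^[m] f := by
        intro ij hij
        rw [HasAntidiagonal.mem_antidiagonal] at hij
        rw [hij]
      rw [Finset.sum_congr rfl hc, ← Finset.sum_mul, ← map_sum, ← Finset.sum_div,
        conv_lemma F hF x m]
    rw [Finset.sum_congr rfl fun m _ => hin m, Finset.sum_eq_single 0]
    · simp
    · intro m _ hm
      rw [if_neg hm, zero_div, map_zero, zero_mul]
    · intro h; exact absurd (Finset.mem_range.mpr (by omega)) h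
  have hTS : S = T := by
    have hT1 : T.comp (X + 1) - T = f := by
      rw [← C_1]
      exact hmain
    have h1 : (S - T).comp (X + 1) - (S - T) = 0 := by
      rw [sub_comp]
      linear_combination hS - hT1
    have h0' : (S - T).eval 0 = 0 := by rw [eval_sub, hS0, hT0, sub_zero]
    have := S_unique _ h1 h0'
    exact sub_eq_zero.mp this
  rw [hTS, hT, eval_add, eval_mul, eval_C, eval_comp, eval_mul, eval_C, eval_X, eval_finset_sum]
  congr 1
  · congr 1
    congr 1
    rw [div_eq_mul_inv]
    exact mul_comm _ _
  · apply Finset.sum_congr rfl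
    intro r _
    simp only [eval_mul, eval_C, eval_sub]
    ring
end

section
/- For every r ∈ ℕ and every nonzero rational x, F*_r(x) = x^r · F_r(1/x). Moreover, F*_r is a polynomial of degree at most r. -/
/-- The power series `D*(z) = ∑_{r≥0} d*_r z^r` over `ℚ[x]` with
`d*_r = (∏_{j=1}^{r} (x - j))/(r+1)!`. -/
noncomputable def DstarSer : PowerSeries (Polynomial ℚ) :=
  PowerSeries.mk fun r =>
    Polynomial.C ((1 : ℚ) / (Nat.factorial (r + 1))) *
      ∏ j ∈ Finset.range r, (Polynomial.X - Polynomial.C ((j : ℚ) + 1))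

lemma key_D (x : ℚ) (hx : x ≠ 0) :
    PowerSeries.rescale x (PowerSeries.map (Polynomial.evalRingHom (1/x)) Dser) =
      PowerSeries.map (Polynomial.evalRingHom x) DstarSer := by
  ext r
  simp only [Dser, DstarSer, PowerSeries.coeff_rescale, PowerSeries.coeff_map,
    PowerSeries.coeff_mk, Polynomial.eval_prod, Polynomial.coe_evalRingHom,
    Polynomial.eval_mul, Polynomial.eval_C, Polynomial.eval_sub, Polynomial.eval_one,
    Polynomial.eval_X]
  have : x ^ r * ∏ j ∈ Finset.range r, (1 - ((j : ℚ) + 1) * (1/x)) =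
      ∏ j ∈ Finset.range r, (x - ((j : ℚ) + 1)) := by
    rw [show x ^ r = ∏ _j ∈ Finset.range r, x by simp, ← Finset.prod_mul_distrib]
    refine Finset.prod_congr rfl fun j _ => ?_
    field_simp
  rw [← this]; ring

lemma Dstar_coeff_deg (j : ℕ) :
    (Polynomial.C ((1 : ℚ) / (Nat.factorial (j + 1))) *
      ∏ k ∈ Finset.range j, (Polynomial.X - Polynomial.C ((k : ℚ) + 1))).natDegree ≤ j := by
  apply le_trans Polynomial.natDegree_mul_le
  simp only [Polynomial.natDegree_C, zero_add]
  refine le_trans (Polynomial.natDegree_prod_le _ _) ?_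
  calc ∑ k ∈ Finset.range j, (Polynomial.X - Polynomial.C ((k : ℚ) + 1)).natDegree
      ≤ ∑ _k ∈ Finset.range j, 1 := by
        refine Finset.sum_le_sum fun k _ => ?_
        exact le_of_eq (Polynomial.natDegree_X_sub_C ((k : ℚ) + 1))
    _ = j := by simp

/-- For every `r ∈ ℕ` and every nonzero rational `x`, `F*_r(x) = x^r · F_r(1/x)`;
moreover `F*_r` has degree at most `r`. -/
theorem Fstar_eq_pow_mul_F_inv
    (F : ℕ → Polynomial ℚ) (hF : egf F * Dser = 1)
    (Fstar : ℕ → Polynomial ℚ) (hFstar : egf Fstar * DstarSer = 1) :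
    (∀ (r : ℕ) (x : ℚ), x ≠ 0 → (Fstar r).eval x = x ^ r * (F r).eval (1 / x)) ∧
      ∀ r : ℕ, (Fstar r).natDegree ≤ r := by
  constructor
  · intro r x hx
    set e1 := Polynomial.evalRingHom (1/x)
    set e2 := Polynomial.evalRingHom x
    have h1 : (PowerSeries.rescale x (PowerSeries.map e1 (egf F))) *
        PowerSeries.map e2 DstarSer = 1 := by
      rw [← key_D x hx, ← map_mul, ← map_mul, hF, map_one, map_one]
    have h2 : PowerSeries.map e2 (egf Fstar) * PowerSeries.map e2 DstarSer = 1 := by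
      rw [← map_mul, hFstar, map_one]
    have heq : PowerSeries.rescale x (PowerSeries.map e1 (egf F)) =
        PowerSeries.map e2 (egf Fstar) := by
      calc PowerSeries.rescale x (PowerSeries.map e1 (egf F))
          = PowerSeries.rescale x (PowerSeries.map e1 (egf F)) *
            (PowerSeries.map e2 (egf Fstar) * PowerSeries.map e2 DstarSer) := by rw [h2, mul_one]
        _ = PowerSeries.map e2 (egf Fstar) *
            (PowerSeries.rescale x (PowerSeries.map e1 (egf F)) * PowerSeries.map e2 DstarSer) := by ring
        _ = PowerSeries.map e2 (egf Fstar) := by rw [h1, mul_one]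
    have hc := congrArg (PowerSeries.coeff (R := ℚ) r) heq
    simp only [PowerSeries.coeff_rescale, PowerSeries.coeff_map, egf, PowerSeries.coeff_mk,
      Polynomial.coe_evalRingHom, Polynomial.eval_mul, Polynomial.eval_C, e1, e2] at hc
    have hfac : ((Nat.factorial r : ℚ)) ≠ 0 := by exact_mod_cast Nat.factorial_ne_zero r
    field_simp at hc
    linarith [hc]
  · intro r
    induction r using Nat.strong_induction_on with
    | _ r ih =>
      rcases Nat.eq_zero_or_pos r with hr | hr
      · subst hr
        have hc := congrArg (PowerSeries.coeff (R := Polynomial ℚ) 0) hFstar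
        simp [PowerSeries.coeff_zero_eq_constantCoeff, egf, DstarSer, PowerSeries.coeff_mul] at hc
        simp [hc]
      · have hc := congrArg (PowerSeries.coeff (R := Polynomial ℚ) r) hFstar
        rw [PowerSeries.coeff_mul, PowerSeries.coeff_one, if_neg hr.ne'] at hc
        have hmem : ((r, 0) : ℕ × ℕ) ∈ Finset.HasAntidiagonal.antidiagonal r := by simp
        rw [← Finset.add_sum_erase _ _ hmem] at hc
        have h0 : (PowerSeries.coeff (R := Polynomial ℚ) 0) DstarSer = 1 := by
          simp [DstarSer]
        have h1 : (PowerSeries.coeff (R := Polynomial ℚ) r) (egf Fstar) =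
            Polynomial.C ((1 : ℚ) / r.factorial) * Fstar r := by simp [egf]
        rw [h0, h1, mul_one] at hc
        have ha := eq_neg_of_add_eq_zero_left hc
        have hdeg : (Polynomial.C ((1 : ℚ) / r.factorial) * Fstar r).natDegree ≤ r := by
          rw [ha, Polynomial.natDegree_neg]
          refine le_trans (Polynomial.natDegree_sum_le _ _) ?_
          rw [Finset.fold_max_le]
          refine ⟨Nat.zero_le _, fun p hp => ?_⟩
          rw [Finset.mem_erase, Finset.HasAntidiagonal.mem_antidiagonal] at hp
          obtain ⟨hne, hpsum⟩ := hp
          have hp2 : p.2 ≠ 0 := by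
            intro h2
            apply hne
            have : p.1 = r := by omega
            exact Prod.ext this h2
          have hp1 : p.1 < r := by omega
          simp only [Function.comp_apply]
          refine le_trans Polynomial.natDegree_mul_le ?_
          have hA : ((PowerSeries.coeff (R := Polynomial ℚ) p.1) (egf Fstar)).natDegree ≤ p.1 := by
            simp only [egf, PowerSeries.coeff_mk]
            refine le_trans Polynomial.natDegree_mul_le ?_
            simpa using ih p.1 hp1
          have hB : ((PowerSeries.coeff (R := Polynomial ℚ) p.2) DstarSer).natDegree ≤ p.2 := by
            simpa [DstarSer] using Dstar_coeff_deg p.2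
          omega
        have hfac : ((1 : ℚ) / r.factorial) ≠ 0 := by
          have : ((r.factorial : ℚ)) ≠ 0 := by exact_mod_cast r.factorial_ne_zero
          simp [this]
        rwa [Polynomial.natDegree_C_mul hfac] at hdeg
end

section
/- For every r ∈ ℕ, the polynomial F_r has degree exactly r. -/
section Aux

open Polynomial Finset


noncomputable def Bp (n : ℕ) : Polynomial ℝ :=
  C ((1:ℝ) / n.factorial) * ∏ k ∈ Finset.range n, (X - C (k:ℝ))

noncomputable def Lc (j : ℕ) : ℝ := (-1)^j / (j+1)

lemma Bp_zero : Bp 0 = 1 := by simp [Bp]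

lemma Bp_succ (n : ℕ) :
    C ((n:ℝ)+1) * Bp (n+1) = Bp n * (X - C (n:ℝ)) := by
  have h : ((n:ℝ)+1) ≠ 0 := by positivity
  have h2 : (n.factorial : ℝ) ≠ 0 := Nat.cast_ne_zero.2 n.factorial_ne_zero
  rw [Bp, Bp, Finset.prod_range_succ, Nat.factorial_succ]
  push_cast
  rw [← mul_assoc, ← C_mul, mul_assoc]
  congr 2
  field_simp

lemma Bp_mul_lin (n i : ℕ) :
    Bp i * (X - C ((n:ℝ)+1)) = C ((i:ℝ)+1) * Bp (i+1) + C ((i:ℝ)-((n:ℝ)+1)) * Bp i := by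
  have h : (X - C ((n:ℝ)+1)) = (X - C (i:ℝ)) + C ((i:ℝ)-((n:ℝ)+1)) := by
    simp only [map_sub, map_add, map_one]; ring
  rw [h, mul_add, ← Bp_succ i, mul_comm (Bp i)]

lemma Bstar (n : ℕ) :
    derivative (Bp (n+1)) = ∑ i ∈ range (n+1), C (Lc (n-i)) * Bp i := by
  induction n with
  | zero => simp [Bp, Lc]
  | succ n ih =>
    have hC : (C (((n:ℝ)+2)) : Polynomial ℝ) ≠ 0 := by
      rw [Ne, C_eq_zero]; positivity
    apply mul_left_cancel₀ hC
    have key : C ((n:ℝ)+2) * Bp (n+2) = Bp (n+1) * (X - C ((n:ℝ)+1)) := by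
      have h := Bp_succ (n+1)
      push_cast at h
      convert h using 3 <;> push_cast <;> ring
    have lhs : C ((n:ℝ)+2) * derivative (Bp (n+2)) =
        (∑ i ∈ range (n+1), C (Lc (n-i)) * Bp i) * (X - C ((n:ℝ)+1)) + Bp (n+1) := by
      rw [← derivative_C_mul, key, derivative_mul, ih]
      simp
    rw [lhs]
    have expand : (∑ i ∈ range (n+1), C (Lc (n-i)) * Bp i) * (X - C ((n:ℝ)+1))
        = (∑ i ∈ range (n+1), C (Lc (n-i) * ((i:ℝ)+1)) * Bp (i+1))
          + ∑ i ∈ range (n+1), C (Lc (n-i) * ((i:ℝ)-((n:ℝ)+1))) * Bp i := by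
      rw [Finset.sum_mul, ← Finset.sum_add_distrib]
      refine Finset.sum_congr rfl fun i _ => ?_
      rw [mul_assoc, Bp_mul_lin n i, mul_add, C_mul, C_mul]
      ring
    have rhs : C ((n:ℝ)+2) * ∑ i ∈ range (n+2), C (Lc (n+1-i)) * Bp i
        = (∑ i ∈ range (n+1), C (((n:ℝ)+2) * Lc (n-i)) * Bp (i+1))
          + C (((n:ℝ)+2) * Lc (n+1)) * Bp 0 := by
      rw [Finset.mul_sum]
      rw [Finset.sum_range_succ' (fun i => C ((n:ℝ)+2) * (C (Lc (n+1-i)) * Bp i)) (n+1)]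
      congr 1
      · refine Finset.sum_congr rfl fun i _ => ?_
        rw [show n+1-(i+1) = n-i from by omega, C_mul]
        ring
      · rw [Nat.sub_zero, C_mul]
        ring
    rw [expand, rhs]
    have s2 : (∑ i ∈ range (n+1), C (Lc (n-i) * ((i:ℝ)-((n:ℝ)+1))) * Bp i)
        = (∑ i ∈ range n, C (Lc (n-(i+1)) * ((↑(i+1):ℝ)-((n:ℝ)+1))) * Bp (i+1))
          + C (Lc (n-0) * (((0:ℕ):ℝ)-((n:ℝ)+1))) * Bp 0 := by
      exact Finset.sum_range_succ' _ n
    rw [s2]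
    rw [Finset.sum_range_succ (fun i => C (Lc (n-i) * ((i:ℝ)+1)) * Bp (i+1)) n]
    rw [Finset.sum_range_succ (fun i => C (((n:ℝ)+2) * Lc (n-i)) * Bp (i+1)) n]
    have comb : (∑ i ∈ range n, C (Lc (n-i) * ((i:ℝ)+1)) * Bp (i+1))
        + (∑ i ∈ range n, C (Lc (n-(i+1)) * ((↑(i+1):ℝ)-((n:ℝ)+1))) * Bp (i+1))
        = ∑ i ∈ range n, C (((n:ℝ)+2) * Lc (n-i)) * Bp (i+1) := by
      rw [← Finset.sum_add_distrib]
      refine Finset.sum_congr rfl fun i hi => ?_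
      rw [← add_mul, ← C_add]
      congr 2
      rw [Finset.mem_range] at hi
      obtain ⟨t, rfl⟩ : ∃ t, n = i + (t+1) := ⟨n - i - 1, by omega⟩
      rw [show i + (t+1) - i = t+1 from by omega, show i + (t+1) - (i+1) = t from by omega]
      simp only [Lc]
      have ht1 : ((t:ℝ)+1) ≠ 0 := by positivity
      have ht2 : ((t:ℝ)+1+1) ≠ 0 := by positivity
      push_cast
      rw [pow_succ]
      field_simp
      ring
    have tail : C (Lc (n-n) * ((n:ℝ)+1)) * Bp (n+1) + Bp (n+1)
        = C (((n:ℝ)+2) * Lc (n-n)) * Bp (n+1) := by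
      rw [Nat.sub_self]
      have hc : (C (Lc 0 * ((n:ℝ)+1)) : Polynomial ℝ) + 1 = C (((n:ℝ)+2) * Lc 0) := by
        rw [← C_1, ← C_add]
        congr 1
        simp [Lc]
        ring
      calc C (Lc 0 * ((n:ℝ)+1)) * Bp (n+1) + Bp (n+1)
          = (C (Lc 0 * ((n:ℝ)+1)) + 1) * Bp (n+1) := by ring
        _ = _ := by rw [hc]
    have head : C (Lc (n-0) * (((0:ℕ):ℝ)-((n:ℝ)+1))) * Bp 0
        = C (((n:ℝ)+2) * Lc (n+1)) * Bp 0 := by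
      congr 1
      rw [Nat.sub_zero]
      simp only [Lc]
      rw [pow_succ]
      have : ((n:ℝ)+1) ≠ 0 := by positivity
      have : ((n:ℝ)+1+1) ≠ 0 := by positivity
      push_cast
      field_simp
      rw [C_inj]; field_simp; ring
    rw [← comb, ← tail, ← head]
    ring

noncomputable def Gc (n : ℕ) : ℝ := ∫ x in (0:ℝ)..1, (Bp n).eval x


lemma Gc_zero : Gc 0 = 1 := by simp [Gc, Bp]

lemma Bp_eval_zero (n : ℕ) : (Bp (n+1)).eval 0 = 0 := by
  rw [Bp, eval_mul, eval_prod]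
  rw [Finset.prod_eq_zero (Finset.mem_range.2 (Nat.succ_pos n))]
  · ring
  · simp

lemma Bp_eval_one (n : ℕ) : (Bp (n+2)).eval 1 = 0 := by
  rw [Bp, eval_mul, eval_prod]
  rw [Finset.prod_eq_zero (Finset.mem_range.2 (show 1 < n+2 by omega))]
  · ring
  · simp

lemma ftc (p : Polynomial ℝ) :
    ∫ x in (0:ℝ)..1, (derivative p).eval x = p.eval 1 - p.eval 0 := by
  refine intervalIntegral.integral_deriv_eq_sub' (fun x => p.eval x) ?_ ?_ ?_
  · funext x; exact Polynomial.deriv (p := p)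
  · intro x _; exact p.differentiableAt
  · exact (derivative p).continuous.continuousOn

lemma Gc_conv (n : ℕ) :
    ∑ i ∈ range (n+1), Lc (n-i) * Gc i = if n = 0 then 1 else 0 := by
  have h1 : ∑ i ∈ range (n+1), Lc (n-i) * Gc i
      = ∫ x in (0:ℝ)..1, ∑ i ∈ range (n+1), Lc (n-i) * (Bp i).eval x := by
    rw [intervalIntegral.integral_finset_sum]
    · exact Finset.sum_congr rfl fun i _ => by
        rw [intervalIntegral.integral_const_mul]; rfl
    · intro i _
      exact (continuous_const.mul (Bp i).continuous).intervalIntegrable _ _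
  have h2 : ∀ x : ℝ, ∑ i ∈ range (n+1), Lc (n-i) * (Bp i).eval x
      = (derivative (Bp (n+1))).eval x := by
    intro x
    rw [Bstar n, eval_finset_sum]
    exact Finset.sum_congr rfl fun i _ => by rw [eval_mul, eval_C]
  rw [h1]
  simp_rw [h2]
  rw [ftc]
  rcases n with _ | n
  · simp [Bp]
  · rw [Bp_eval_one, Bp_eval_zero]
    simp

lemma Gc_succ_pos (n : ℕ) : 0 < (-1:ℝ)^n * Gc (n+1) := by
  rw [Gc, ← intervalIntegral.integral_const_mul]
  apply intervalIntegral.intervalIntegral_pos_of_pos_on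
  · exact (continuous_const.mul (Bp (n+1)).continuous).intervalIntegrable _ _
  · intro x hx
    obtain ⟨hx0, hx1⟩ := hx
    rw [Bp, eval_mul, eval_C, eval_prod]
    simp only [eval_sub, eval_X, eval_C]
    rw [Finset.prod_range_succ' (fun k => x - (k:ℝ)) n]
    push_cast
    rw [show ((-1:ℝ))^n = ∏ _k ∈ range n, (-1:ℝ) by simp]
    have h : (∏ _k ∈ range n, (-1:ℝ)) * ∏ k ∈ range n, (x - ((k:ℝ) + 1))
        = ∏ k ∈ range n, (((k:ℝ) + 1) - x) := by
      rw [← Finset.prod_mul_distrib]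
      exact Finset.prod_congr rfl fun k _ => by ring
    have key : (∏ _k ∈ range n, (-1:ℝ)) * (1 / ((n+1).factorial : ℝ) *
        ((∏ k ∈ range n, (x - ((k:ℝ) + 1))) * (x - 0)))
        = 1 / ((n+1).factorial : ℝ) * ((∏ k ∈ range n, (((k:ℝ) + 1) - x)) * x) := by
      rw [← h]; ring
    rw [key]
    have hf : (0:ℝ) < ((n+1).factorial : ℝ) := by positivity
    have hq : 0 < ∏ k ∈ range n, (((k:ℝ) + 1) - x) := by
      apply Finset.prod_pos
      intro k _
      have : (0:ℝ) ≤ k := Nat.cast_nonneg k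
      linarith
    positivity
  · norm_num

lemma Gc_ne (n : ℕ) : Gc n ≠ 0 := by
  cases n with
  | zero => rw [Gc_zero]; norm_num
  | succ n =>
    intro h
    have := Gc_succ_pos n
    rw [h, mul_zero] at this
    exact lt_irrefl 0 this

lemma conv_unique (a b : ℕ → ℝ)
    (ha : ∀ n, ∑ i ∈ range (n+1), Lc (n-i) * a i = if n = 0 then 1 else 0)
    (hb : ∀ n, ∑ i ∈ range (n+1), Lc (n-i) * b i = if n = 0 then 1 else 0) :
    ∀ n, a n = b n := by
  intro n
  induction n using Nat.strong_induction_on with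
  | _ n ih =>
    have h := (ha n).trans (hb n).symm
    rw [Finset.sum_range_succ, Finset.sum_range_succ, Nat.sub_self] at h
    have hl : Lc 0 = 1 := by simp [Lc]
    rw [hl, one_mul, one_mul] at h
    have hs : ∑ i ∈ range n, Lc (n-i) * a i = ∑ i ∈ range n, Lc (n-i) * b i :=
      Finset.sum_congr rfl fun i hi => by rw [ih i (mem_range.1 hi)]
    linarith

noncomputable def dq (r : ℕ) : Polynomial ℚ :=
  C ((1:ℚ) / (Nat.factorial (r+1))) * ∏ j ∈ Finset.range r, (1 - C ((j:ℚ)+1) * X)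

lemma dq_zero : dq 0 = 1 := by simp [dq]

lemma dq_natDegree_le (r : ℕ) : (dq r).natDegree ≤ r := by
  refine le_trans (natDegree_mul_le) ?_
  rw [natDegree_C, zero_add]
  refine le_trans (natDegree_prod_le _ _) ?_
  refine le_trans (Finset.sum_le_sum (g := fun _ => 1)
    (fun j _ => ?_)) (by simp)
  refine le_trans (natDegree_sub_le _ _) (max_le (by simp) ?_)
  exact le_trans (natDegree_C_mul_le _ _) (by simp)

lemma dq_coeff (r : ℕ) : (dq r).coeff r = (-1)^r / (r+1) := by
  rw [dq, coeff_C_mul]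
  have hc : (∏ j ∈ Finset.range r, (1 - C ((j:ℚ)+1) * X)).coeff r
      = ∏ j ∈ Finset.range r, (1 - C ((j:ℚ)+1) * X).coeff 1 := by
    have := Polynomial.coeff_prod_of_natDegree_le (s := Finset.range r)
      (f := fun j => 1 - C ((j:ℚ)+1) * X) (n := 1) ?_
    · simpa using this
    · intro j _
      refine le_trans (natDegree_sub_le _ _) (max_le (by simp) ?_)
      exact le_trans (natDegree_C_mul_le _ _) (by simp)
  rw [hc]
  have h1 : ∀ j ∈ Finset.range r, (1 - C ((j:ℚ)+1) * X).coeff 1 = -((j:ℚ)+1) := by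
    intro j _
    rw [coeff_sub, coeff_one, coeff_C_mul, coeff_X_one]
    simp
  rw [Finset.prod_congr rfl h1]
  have h2 : ∏ j ∈ Finset.range r, (-((j:ℚ)+1)) = (-1)^r * (r.factorial : ℚ) := by
    rw [show (fun j : ℕ => -((j:ℚ)+1)) = fun j : ℕ => (-1) * ((j:ℚ)+1) from by funext j; ring]
    rw [Finset.prod_mul_distrib, Finset.prod_const, Finset.card_range]
    congr 1
    have hcast : ∏ x ∈ Finset.range r, ((x:ℚ)+1)
        = ((∏ x ∈ Finset.range r, (x+1) : ℕ) : ℚ) := by push_cast; rfl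
    rw [hcast, Finset.prod_range_add_one_eq_factorial r]
  rw [h2, Nat.factorial_succ]
  have h3 : (r.factorial : ℚ) ≠ 0 := Nat.cast_ne_zero.2 r.factorial_ne_zero
  have h4 : ((r:ℚ)+1) ≠ 0 := by positivity
  push_cast
  field_simp

/-- For every `r ∈ ℕ`, the polynomial `F_r` has degree exactly `r`. -/
theorem F_degree_eq (F : ℕ → Polynomial ℚ) (hF : egf F * Dser = 1) :
    ∀ r : ℕ, (F r).degree = r := by
  have hrec : ∀ n, ∑ i ∈ range (n+1), C ((1:ℚ)/(i.factorial)) * F i * dq (n-i)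
      = if n = 0 then 1 else 0 := by
    intro n
    have h := congrArg (PowerSeries.coeff (R := Polynomial ℚ) n) hF
    rw [PowerSeries.coeff_mul, PowerSeries.coeff_one,
      Finset.Nat.sum_antidiagonal_eq_sum_range_succ_mk] at h
    simpa [egf, Dser, dq, PowerSeries.coeff_mk] using h
  have hdeg : ∀ n, (F n).natDegree ≤ n := by
    intro n
    induction n using Nat.strong_induction_on with
    | _ n ih =>
      have h := hrec n
      rw [Finset.sum_range_succ, Nat.sub_self, dq_zero, mul_one] at h
      have hFn : C ((1:ℚ)/n.factorial) * F n
          = (if n = 0 then 1 else 0)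
            - ∑ i ∈ range n, C ((1:ℚ)/i.factorial) * F i * dq (n-i) :=
        eq_sub_of_add_eq' h
      have hF2 : F n = C ((n.factorial : ℚ)) * (C ((1:ℚ)/n.factorial) * F n) := by
        rw [← mul_assoc, ← C_mul]
        rw [show (n.factorial : ℚ) * ((1:ℚ)/n.factorial) = 1 from by
          field_simp]
        simp
      rw [hF2, hFn]
      refine le_trans natDegree_mul_le ?_
      rw [natDegree_C, zero_add]
      refine le_trans (natDegree_sub_le _ _) (max_le ?_ ?_)
      · split <;> simp
      · refine natDegree_sum_le_of_forall_le _ _ fun i hi => ?_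
        rw [Finset.mem_range] at hi
        refine le_trans natDegree_mul_le ?_
        have h1 : (C ((1:ℚ)/i.factorial) * F i).natDegree ≤ i :=
          le_trans (natDegree_C_mul_le _ _) (ih i hi)
        have h2 := dq_natDegree_le (n-i)
        omega
  -- top coefficient sequence
  set u : ℕ → ℚ := fun n => (1:ℚ)/n.factorial * (F n).coeff n with hu
  have huconv : ∀ n, ∑ i ∈ range (n+1), Lc (n-i) * ((u i : ℚ) : ℝ)
      = if n = 0 then 1 else 0 := by
    intro n
    have h := congrArg (fun p : Polynomial ℚ => p.coeff n) (hrec n)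
    rw [Polynomial.finset_sum_coeff] at h
    have hterm : ∀ i ∈ range (n+1),
        (C ((1:ℚ)/i.factorial) * F i * dq (n-i)).coeff n
        = u i * ((-1)^(n-i) / ((n-i:ℕ)+1)) := by
      intro i hi
      rw [Finset.mem_range] at hi
      obtain ⟨j, hj⟩ : ∃ j, n - i = j := ⟨n-i, rfl⟩
      rw [hj, show n = i + j from by omega]
      rw [coeff_mul_add_eq_of_natDegree_le
        (le_trans (natDegree_C_mul_le _ _) (hdeg i)) (dq_natDegree_le j)]
      rw [coeff_C_mul, dq_coeff]
    rw [Finset.sum_congr rfl hterm] at h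
    have hifq : ((if n = 0 then 1 else 0 : Polynomial ℚ)).coeff n
        = if n = 0 then (1:ℚ) else 0 := by
      split <;> simp_all
    rw [hifq] at h
    have hcast := congrArg (fun q : ℚ => (q : ℝ)) h
    push_cast [apply_ite (fun q : ℚ => (q : ℝ))] at hcast
    rw [← hcast]
    refine Finset.sum_congr rfl fun i hi => ?_
    rw [Lc]
    push_cast
    ring
  have hGu : ∀ n, ((u n : ℚ) : ℝ) = Gc n :=
    conv_unique _ _ huconv Gc_conv
  intro r
  have hne : (F r).coeff r ≠ 0 := by
    intro h0
    apply Gc_ne r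
    rw [← hGu r, hu]
    simp [h0]
  have h1 : r ≤ (F r).natDegree := le_natDegree_of_ne_zero hne
  have hn : (F r).natDegree = r := le_antisymm (hdeg r) h1
  rw [Polynomial.degree_eq_natDegree (fun hz => hne (by simp [hz])), hn]

end Aux
end

section
/- For every r ∈ ℕ, F_r(1/2) = (−1)^r · r!/4^r. -/
lemma evalD : ∀ j, ((PowerSeries.coeff j Dser).eval (1/2 : ℚ)) =
    if j = 0 then 1 else if j = 1 then 1/4 else 0 := by
  intro j
  simp only [Dser, PowerSeries.coeff_mk, Polynomial.eval_mul, Polynomial.eval_C,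
    Polynomial.eval_prod, Polynomial.eval_sub, Polynomial.eval_one, Polynomial.eval_X]
  match j with
  | 0 => norm_num
  | 1 => norm_num
  | (n+2) =>
    have : ∏ k ∈ Finset.range (n+2), (1 - ((k:ℚ)+1) * (2⁻¹:ℚ)) = 0 := by
      apply Finset.prod_eq_zero (i := 1) (by simp)
      norm_num
    simp [this]

/-- For every `r ∈ ℕ`, `F_r(1/2) = (-1)^r · r!/4^r`. -/
theorem F_eval_half (F : ℕ → Polynomial ℚ) (hF : egf F * Dser = 1) :
    ∀ r : ℕ, (F r).eval (1 / 2) = (-1) ^ r * (Nat.factorial r : ℚ) / 4 ^ r := by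
  have key : ∀ n, ∑ ij ∈ Finset.HasAntidiagonal.antidiagonal n,
      (1 / (Nat.factorial ij.1 : ℚ)) * (F ij.1).eval (1/2) *
        ((PowerSeries.coeff ij.2 Dser).eval (1/2)) = if n = 0 then 1 else 0 := by
    intro n
    have h := congrArg (fun p => (PowerSeries.coeff n p).eval (1/2 : ℚ)) hF
    simp only [PowerSeries.coeff_mul, Polynomial.eval_finset_sum, egf, PowerSeries.coeff_mk,
      Polynomial.eval_mul, Polynomial.eval_C, PowerSeries.coeff_one] at h
    simpa [apply_ite (Polynomial.eval (2⁻¹:ℚ))] using h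
  have hrec : ∀ n, (1 / (Nat.factorial (n+1) : ℚ)) * (F (n+1)).eval (1/2)
      + (1 / (Nat.factorial n : ℚ)) * (F n).eval (1/2) * (1/4) = 0 := by
    intro n
    have h := key (n+1)
    rw [Finset.Nat.sum_antidiagonal_eq_sum_range_succ_mk] at h
    rw [Finset.sum_range_succ, Finset.sum_range_succ] at h
    have hz : ∑ k ∈ Finset.range n, (1 / (Nat.factorial k : ℚ)) * (F k).eval (1/2) *
        ((PowerSeries.coeff (n+1-k) Dser).eval (1/2)) = 0 := by
      apply Finset.sum_eq_zero
      intro k hk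
      have hk' : k < n := Finset.mem_range.mp hk
      have : n + 1 - k ≠ 0 := by omega
      have h2 : n + 1 - k ≠ 1 := by omega
      rw [evalD]
      simp [this, h2]
    rw [hz] at h
    simp only [evalD] at h
    norm_num at h ⊢
    linarith [h]
  have base : (F 0).eval (1/2 : ℚ) = 1 := by
    have h := key 0
    simp only [Finset.Nat.antidiagonal_zero, Finset.sum_singleton] at h
    rw [evalD] at h
    norm_num at h
    exact h
  intro r
  induction r with
  | zero => simpa using base
  | succ n ih =>
    have h := hrec n
    have hn : (Nat.factorial n : ℚ) ≠ 0 := Nat.cast_ne_zero.mpr (Nat.factorial_ne_zero n)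
    have hn1 : (Nat.factorial (n+1) : ℚ) ≠ 0 := Nat.cast_ne_zero.mpr (Nat.factorial_ne_zero _)
    have hfact : (Nat.factorial (n+1) : ℚ) = (n+1) * Nat.factorial n := by
      push_cast [Nat.factorial_succ]; ring
    rw [ih] at h
    have h4 : (4:ℚ)^n ≠ 0 := by positivity
    field_simp at h ⊢
    rw [hfact] at h ⊢
    ring_nf at h ⊢
    linarith [h]
end

section
/- For every integer r ≥ 1, F_r(2) = (−1)^r · (2r)! / ((1 − 2r) · r! · 2^{r+1}). -/
open PowerSeries Finset

noncomputable def Dq : PowerSeries ℚ := PowerSeries.mk fun r => (-1/2 : ℚ)^r * catalan r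

noncomputable def Eq' : PowerSeries ℚ :=
  PowerSeries.mk fun r => if r = 0 then 1 else -((-1/2 : ℚ)^r * catalan (r-1))

lemma catalan_fact (n : ℕ) : ((n+1) * catalan n * n.factorial * n.factorial : ℕ) = (2*n).factorial := by
  rw [succ_mul_catalan_eq_centralBinom, Nat.centralBinom]
  have := Nat.choose_mul_factorial_mul_factorial (Nat.le_mul_of_pos_left n (by norm_num) : n ≤ 2*n)
  simpa [two_mul, Nat.add_sub_cancel] using this

lemma catalan_q (n : ℕ) : (catalan n : ℚ) = (2*n).factorial / ((n+1) * n.factorial * n.factorial) := by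
  have h := catalan_fact n
  have h2 : (((n:ℚ)+1) * catalan n * n.factorial * n.factorial : ℚ) = ((2*n).factorial : ℚ) := by
    exact_mod_cast congrArg (Nat.cast : ℕ → ℚ) h
  field_simp
  try linarith [h2]

lemma prod_lem (n : ℕ) :
    (∏ j ∈ Finset.range n, (1 - ((j:ℚ)+1)*2)) * (2^n * n.factorial) = (-1)^n * (2*n).factorial := by
  induction n with
  | zero => simp
  | succ m ih =>
    rw [Finset.prod_range_succ]
    have h1 : (2*(m+1)).factorial = (2*m+2) * ((2*m+1) * (2*m).factorial) := by
      have : 2*(m+1) = (2*m+1)+1 := by ring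
      rw [this, Nat.factorial_succ, Nat.factorial_succ]
      try ring
    rw [h1, Nat.factorial_succ, pow_succ]
    push_cast
    push_cast at ih
    linear_combination ((1 - ((m:ℚ)+1)*2) * 2 * ((m:ℚ)+1)) * ih

lemma map_Dser : PowerSeries.map (Polynomial.evalRingHom (2:ℚ)) Dser = Dq := by
  ext n
  simp only [PowerSeries.coeff_map, Dser, Dq, PowerSeries.coeff_mk, map_mul,
    Polynomial.coe_evalRingHom, Polynomial.eval_C, Polynomial.eval_prod, Polynomial.eval_sub,
    Polynomial.eval_one, Polynomial.eval_mul, Polynomial.eval_add, Polynomial.eval_natCast,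
    Polynomial.eval_X]
  have hp := prod_lem n
  have hc := catalan_q n
  have h2 : ((2:ℚ)^n * n.factorial) ≠ 0 := by positivity
  have hfac : ((n+1).factorial : ℚ) = (n+1) * n.factorial := by
    rw [Nat.factorial_succ]; push_cast; ring
  rw [hc, hfac]
  have hne1 : ((n:ℚ)+1) ≠ 0 := by positivity
  have hne2 : ((n.factorial : ℚ)) ≠ 0 := by positivity
  have hP : ∏ x ∈ range n, (1 - ((x:ℚ) + 1) * 2) = (-1)^n * ((2*n).factorial:ℚ) / (2^n * n.factorial) := by
    rw [eq_div_iff h2]; exact hp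
  rw [hP]
  field_simp
  rw [← mul_pow]; norm_num

lemma EqDq : Eq' * Dq = 1 := by
  ext n
  cases n with
  | zero => simp [Eq', Dq, PowerSeries.coeff_zero_eq_constantCoeff]
  | succ m =>
    rw [PowerSeries.coeff_mul, Finset.Nat.sum_antidiagonal_eq_sum_range_succ_mk]
    rw [Finset.sum_range_succ']
    have h0 : (PowerSeries.coeff 0) Eq' * (PowerSeries.coeff (m+1-0)) Dq
        = (-1/2:ℚ)^(m+1) * catalan (m+1) := by
      simp [Eq', Dq]
    rw [h0]
    have hrest : ∀ i ∈ Finset.range (m+1),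
        (PowerSeries.coeff (i+1)) Eq' * (PowerSeries.coeff (m+1-(i+1))) Dq
        = -((-1/2:ℚ)^(m+1) * (catalan i * catalan (m-i))) := by
      intro i hi
      simp only [Finset.mem_range] at hi
      simp only [Eq', Dq, PowerSeries.coeff_mk, Nat.add_sub_cancel, if_neg (Nat.succ_ne_zero i)]
      have : m+1-(i+1) = m-i := by omega
      rw [this]
      have hpow : (-1/2:ℚ)^(i+1) * (-1/2:ℚ)^(m-i) = (-1/2:ℚ)^(m+1) := by
        rw [← pow_add]; congr 1; omega
      linear_combination (-(catalan i:ℚ) * (catalan (m-i) : ℚ)) * hpow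
    rw [Finset.sum_congr rfl hrest, Finset.sum_neg_distrib]
    rw [← Finset.mul_sum]
    have hcat : ∑ i ∈ Finset.range (m+1), ((catalan i : ℚ) * catalan (m-i)) = catalan (m+1) := by
      rw [catalan_succ']
      push_cast
      rw [Finset.Nat.sum_antidiagonal_eq_sum_range_succ_mk]
    rw [hcat]
    simp

/-- For every `r ≥ 1`, `F_r(2) = (-1)^r · (2r)! / ((1 - 2r) · r! · 2^{r+1})`. -/
theorem F_eval_two (F : ℕ → Polynomial ℚ) (hF : egf F * Dser = 1) :
    ∀ r : ℕ, 1 ≤ r →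
      (F r).eval 2 =
        (-1) ^ r * (Nat.factorial (2 * r) : ℚ) /
          ((1 - 2 * (r : ℚ)) * (Nat.factorial r : ℚ) * 2 ^ (r + 1)) := by
  have hmap : PowerSeries.map (Polynomial.evalRingHom (2:ℚ)) (egf F) * Dq = 1 := by
    rw [← map_Dser, ← map_mul, hF, map_one]
  have hEq : PowerSeries.map (Polynomial.evalRingHom (2:ℚ)) (egf F) = Eq' := by
    calc PowerSeries.map (Polynomial.evalRingHom (2:ℚ)) (egf F)
        = PowerSeries.map (Polynomial.evalRingHom (2:ℚ)) (egf F) * (Eq' * Dq) := by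
          rw [EqDq, mul_one]
      _ = Eq' * (PowerSeries.map (Polynomial.evalRingHom (2:ℚ)) (egf F) * Dq) := by ring
      _ = Eq' := by rw [hmap, mul_one]
  rintro ⟨⟩ hr
  · omega
  rename_i m
  have hcoef := congrArg (PowerSeries.coeff (m+1)) hEq
  simp only [PowerSeries.coeff_map, egf, Eq', PowerSeries.coeff_mk, map_mul,
    Polynomial.coe_evalRingHom, Polynomial.eval_C, Nat.add_sub_cancel,
    if_neg (Nat.succ_ne_zero m)] at hcoef
  rw [catalan_q] at hcoef
  have h1 : ((m+1).factorial:ℚ) = ((m:ℚ)+1)*m.factorial := by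
    rw [Nat.factorial_succ]; push_cast; ring
  have h2 : ((2*(m+1)).factorial:ℚ) = (2*(m:ℚ)+2)*((2*(m:ℚ)+1)*(2*m).factorial) := by
    have h3 : 2*(m+1) = (2*m+1)+1 := by ring
    rw [h3, Nat.factorial_succ, Nat.factorial_succ]; push_cast; ring
  rw [h1] at hcoef
  rw [h1, h2]
  have hm : ((m:ℚ)+1) ≠ 0 := by positivity
  have hf : ((m.factorial:ℚ)) ≠ 0 := Nat.cast_ne_zero.2 (Nat.factorial_ne_zero _)
  have hd : (1 - 2*((m:ℚ)+1)) ≠ 0 := by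
    have : (0:ℚ) ≤ m := Nat.cast_nonneg m
    intro h; linarith
  push_cast at hcoef ⊢
  field_simp at hcoef ⊢
  have h4 : (Polynomial.eval 2 (F (m+1)) * 2^(m+1) * ((m:ℚ)+1) * m.factorial) * m.factorial
      = (-((-1)^(m+1) * ((2*m).factorial:ℚ) * ((m:ℚ)+1))) * m.factorial := by
    have hc2 : (m.factorial:ℚ) * Polynomial.eval 2 (F (m+1)) * 2^(m+1) = -((-1)^(m+1) * ((2*m).factorial:ℚ)) := by
      rw [hcoef, neg_pow, div_pow, one_pow]
      field_simp
    linear_combination (((m:ℚ)+1) * m.factorial) * hc2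
  have h5 := mul_right_cancel₀ hf h4
  have h6 : (Polynomial.eval 2 (F (m+1)) * 2^(m+1) * m.factorial) * ((m:ℚ)+1)
      = (-((-1)^(m+1) * ((2*m).factorial:ℚ))) * ((m:ℚ)+1) := by linear_combination h5
  have h7 := mul_right_cancel₀ hm h6
  have h8 : Polynomial.eval 2 (F (m+1)) = -((-1)^(m+1) * ((2*m).factorial:ℚ)) / (2^(m+1) * m.factorial) := by
    rw [eq_div_iff (by positivity)]; linear_combination h7
  have hd2 : (-1 - (m:ℚ)*2) ≠ 0 := by
    have : (0:ℚ) ≤ m := Nat.cast_nonneg m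
    intro h; linarith
  rw [h8]
  field_simp
  ring
end

section
/- For every integer r ≥ 2, F_r(−1) = 0; that is, x = −1 is a root of F_r for all r ≥ 2. Moreover, F_0(−1) = 1 and F_1(−1) = −1. -/
lemma prod_eval : ∀ n : ℕ, (∏ j ∈ Finset.range n, ((j : ℚ) + 2)) = (n + 1).factorial
  | 0 => by simp
  | n + 1 => by
    have h : (((n+1+1).factorial : ℕ) : ℚ) = ((n:ℚ)+2) * ((n+1).factorial : ℕ) := by
      rw [Nat.factorial_succ]
      push_cast
      ring
    rw [Finset.prod_range_succ, prod_eval n, h]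
    ring

lemma Dser_map :
    PowerSeries.map (Polynomial.evalRingHom (-1 : ℚ)) Dser = PowerSeries.mk fun _ => 1 := by
  ext n
  simp only [PowerSeries.coeff_map, Dser, PowerSeries.coeff_mk, Polynomial.coe_evalRingHom, Polynomial.eval_mul, Polynomial.eval_C, Polynomial.eval_prod,
    Polynomial.eval_sub, Polynomial.eval_one, Polynomial.eval_mul, Polynomial.eval_X]
  have : ∀ j ∈ Finset.range n, (1 - ((j : ℚ) + 1) * (-1)) = ((j : ℚ) + 2) := by
    intro j _; ring
  rw [Finset.prod_congr rfl this, prod_eval n, one_div,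
    inv_mul_cancel₀ (by exact_mod_cast (n + 1).factorial_ne_zero)]

lemma mk_one_mul : (PowerSeries.mk fun _ => (1 : ℚ)) * (1 - PowerSeries.X) = 1 := by
  ext n
  rw [mul_sub, mul_one]
  cases n with
  | zero => simp
  | succ n => simp [PowerSeries.coeff_succ_mul_X, PowerSeries.coeff_mk]

/-- `x = -1` is a root of `F_r` for all `r ≥ 2`; moreover `F_0(-1) = 1` and `F_1(-1) = -1`. -/
theorem F_eval_neg_one (F : ℕ → Polynomial ℚ) (hF : egf F * Dser = 1) :
    (∀ r : ℕ, 2 ≤ r → (F r).eval (-1) = 0) ∧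
      (F 0).eval (-1) = 1 ∧ (F 1).eval (-1) = -1 := by
  have hmap := congrArg (PowerSeries.map (Polynomial.evalRingHom (-1 : ℚ))) hF
  rw [map_mul, map_one, Dser_map] at hmap
  have hA : PowerSeries.map (Polynomial.evalRingHom (-1 : ℚ)) (egf F)
      = 1 - PowerSeries.X := by
    calc PowerSeries.map (Polynomial.evalRingHom (-1 : ℚ)) (egf F)
        = PowerSeries.map (Polynomial.evalRingHom (-1 : ℚ)) (egf F) *
          ((PowerSeries.mk fun _ => (1 : ℚ)) * (1 - PowerSeries.X)) := by
          rw [mk_one_mul, mul_one]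
      _ = (PowerSeries.map (Polynomial.evalRingHom (-1 : ℚ)) (egf F) *
          (PowerSeries.mk fun _ => (1 : ℚ))) * (1 - PowerSeries.X) := by ring
      _ = 1 - PowerSeries.X := by rw [hmap, one_mul]
  have hcoeff : ∀ r : ℕ, ((r.factorial : ℚ))⁻¹ * (F r).eval (-1)
      = PowerSeries.coeff (R := ℚ) r (1 - PowerSeries.X) := by
    intro r
    rw [← hA]
    simp [egf, PowerSeries.coeff_map, one_div]
  refine ⟨fun r hr => ?_, ?_, ?_⟩
  · have h := hcoeff r
    rw [map_sub, PowerSeries.coeff_one, PowerSeries.coeff_X] at h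
    have hne : r ≠ 0 := by omega
    have hne1 : r ≠ 1 := by omega
    simp [hne, hne1] at h
    rcases h with h | h
    · exact absurd h (by exact_mod_cast r.factorial_ne_zero)
    · exact h
  · have h := hcoeff 0; simpa using h
  · have h := hcoeff 1
    rw [map_sub, PowerSeries.coeff_one, PowerSeries.coeff_X] at h
    simpa using h
end

section
/- For every r ∈ ℕ, the polynomial identity ∑_{k=0}^{r} binom(r,k) · (x)_{r−k} · F*_k(x) = F*_r(−x) holds in ℚ[x], where (x)_m = ∏_{j=0}^{m−1} (x − j) is the falling factorial and F*_r(−x) denotes the composition of F*_r with −x. -/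
/-- The falling factorial `(x)_m = ∏_{j=0}^{m-1} (x - j)` as a polynomial in `ℚ[x]`. -/
noncomputable def fallingFact (m : ℕ) : Polynomial ℚ :=
  ∏ j ∈ Finset.range m, (Polynomial.X - Polynomial.C (j : ℚ))

open Polynomial Finset

section Aux

noncomputable def ffact {R : Type*} [CommRing R] (x : R) (n : ℕ) : R :=
  ∏ j ∈ Finset.range n, (x - (j : R))

lemma ffact_zero {R : Type*} [CommRing R] (x : R) : ffact x 0 = 1 := by simp [ffact]

lemma ffact_succ {R : Type*} [CommRing R] (x : R) (n : ℕ) :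
    ffact x (n + 1) = ffact x n * (x - (n : R)) := Finset.prod_range_succ _ _

lemma ffact_vandermonde {R : Type*} [CommRing R] (x y : R) (n : ℕ) :
    ∑ k ∈ Finset.range (n + 1), (n.choose k : R) * ffact x k * ffact y (n - k) =
      ffact (x + y) n := by
  induction n with
  | zero => simp [ffact]
  | succ n ih =>
    have hT : (∑ k ∈ Finset.range (n + 1),
          (n.choose (k+1) : R) * ffact x (k+1) * ffact y (n - k)) + ffact y (n+1)
        = ∑ k ∈ Finset.range (n + 1), (n.choose k : R) * ffact x k * ffact y (n + 1 - k) := by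
      rw [Finset.sum_range_succ,
        Finset.sum_range_succ' (fun k => (n.choose k : R) * ffact x k * ffact y (n + 1 - k)) n]
      simp [Nat.succ_sub_succ, Nat.choose_succ_self, ffact_zero]
    have step1 : ∑ k ∈ Finset.range (n + 2),
          ((n+1).choose k : R) * ffact x k * ffact y (n + 1 - k)
        = (∑ k ∈ Finset.range (n + 1),
            ((n.choose k : R) + (n.choose (k+1) : R)) * ffact x (k+1) * ffact y (n - k))
          + ffact y (n+1) := by
      rw [Finset.sum_range_succ'
        (fun k => ((n+1).choose k : R) * ffact x k * ffact y (n + 1 - k)) (n+1)]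
      simp [Nat.succ_sub_succ, Nat.choose_succ_succ, ffact_zero]
    have step2 : ∑ k ∈ Finset.range (n + 2),
          ((n+1).choose k : R) * ffact x k * ffact y (n + 1 - k)
        = ∑ k ∈ Finset.range (n + 1),
            ((n.choose k : R) * ffact x (k+1) * ffact y (n - k)
              + (n.choose k : R) * ffact x k * ffact y (n + 1 - k)) := by
      rw [step1, Finset.sum_add_distrib, ← hT]
      simp [add_mul]
      rw [Finset.sum_add_distrib, add_assoc]
    rw [step2]
    have step3 : ∀ k ∈ Finset.range (n + 1),
        (n.choose k : R) * ffact x (k+1) * ffact y (n - k)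
          + (n.choose k : R) * ffact x k * ffact y (n + 1 - k)
        = ((n.choose k : R) * ffact x k * ffact y (n - k)) * (x + y - (n : R)) := by
      intro k hk
      rw [Finset.mem_range] at hk
      have hk' : k ≤ n := Nat.lt_succ_iff.mp hk
      have h1 : n + 1 - k = (n - k) + 1 := by omega
      have h2 : ((n - k : ℕ) : R) = (n : R) - (k : R) := by rw [Nat.cast_sub hk']
      rw [h1, ffact_succ, ffact_succ, h2]
      ring
    rw [Finset.sum_congr rfl step3, ← Finset.sum_mul, ih, ← ffact_succ]

lemma ffact_zero_left {R : Type*} [CommRing R] {n : ℕ} (hn : n ≠ 0) :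
    ffact (0 : R) n = 0 := by
  apply Finset.prod_eq_zero (i := 0)
  · exact Finset.mem_range.mpr (Nat.pos_of_ne_zero hn)
  · simp

lemma fact_inv_mul (n k : ℕ) (hk : k ≤ n) :
    (1 : ℚ) / (Nat.factorial k) * ((1 : ℚ) / (Nat.factorial (n - k)))
      = (n.choose k : ℚ) * ((1 : ℚ) / (Nat.factorial n)) := by
  have h := Nat.choose_mul_factorial_mul_factorial hk
  have h' : (n.choose k : ℚ) * (Nat.factorial k) * (Nat.factorial (n - k))
      = (Nat.factorial n) := by exact_mod_cast congrArg (Nat.cast : ℕ → ℚ) h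
  have hk0 : ((Nat.factorial k : ℚ)) ≠ 0 := Nat.cast_ne_zero.mpr (Nat.factorial_ne_zero k)
  have hnk0 : ((Nat.factorial (n - k) : ℚ)) ≠ 0 := Nat.cast_ne_zero.mpr (Nat.factorial_ne_zero _)
  have hn0 : ((Nat.factorial n : ℚ)) ≠ 0 := Nat.cast_ne_zero.mpr (Nat.factorial_ne_zero n)
  field_simp
  linarith [h']

/-- The substitution `x ↦ -x` as a ring hom on `ℚ[x]`. -/
noncomputable def negSub : Polynomial ℚ →+* Polynomial ℚ :=
  Polynomial.eval₂RingHom Polynomial.C (-Polynomial.X)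

lemma negSub_apply (p : Polynomial ℚ) : negSub p = p.comp (-Polynomial.X) := rfl

lemma negSub_C (a : ℚ) : negSub (Polynomial.C a) = Polynomial.C a := by
  simp [negSub]

lemma negSub_X : negSub (Polynomial.X : Polynomial ℚ) = -Polynomial.X := by
  simp [negSub]

lemma fallingFact_eq (m : ℕ) : fallingFact m = ffact (Polynomial.X : Polynomial ℚ) m := by
  unfold fallingFact ffact
  refine Finset.prod_congr rfl fun j _ => ?_
  simp

lemma negSub_fallingFact (m : ℕ) : negSub (fallingFact m) = ffact (-Polynomial.X : Polynomial ℚ) m := by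
  unfold fallingFact ffact
  rw [map_prod]
  refine Finset.prod_congr rfl fun j _ => ?_
  rw [map_sub, negSub_X, negSub_C]
  simp

/-- The series `B(z) = ∑ (x)_r z^r / r!`, formally `(1+z)^x`. -/
noncomputable def Bser : PowerSeries (Polynomial ℚ) :=
  PowerSeries.mk fun r => Polynomial.C ((1 : ℚ) / (Nat.factorial r)) * fallingFact r

lemma map_negSub_Bser : PowerSeries.map negSub Bser
    = PowerSeries.mk fun r =>
        Polynomial.C ((1 : ℚ) / (Nat.factorial r)) * ffact (-Polynomial.X : Polynomial ℚ) r := by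
  ext n
  simp [Bser, PowerSeries.coeff_mk, map_mul, negSub_C, negSub_fallingFact]

lemma Bser_mul_map : Bser * PowerSeries.map negSub Bser = 1 := by
  ext n
  rw [PowerSeries.coeff_mul, Finset.Nat.sum_antidiagonal_eq_sum_range_succ_mk, map_negSub_Bser]
  have hterm : ∀ k ∈ Finset.range (n + 1),
      (PowerSeries.coeff k Bser) *
        (PowerSeries.coeff (n - k)
          (PowerSeries.mk fun r =>
            Polynomial.C ((1 : ℚ) / (Nat.factorial r)) * ffact (-Polynomial.X : Polynomial ℚ) r))
      = Polynomial.C ((1 : ℚ) / (Nat.factorial n)) *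
          ((n.choose k : Polynomial ℚ) * ffact (Polynomial.X : Polynomial ℚ) k
            * ffact (-Polynomial.X : Polynomial ℚ) (n - k)) := by
    intro k hk
    rw [Finset.mem_range] at hk
    have hk' : k ≤ n := Nat.lt_succ_iff.mp hk
    simp only [Bser, PowerSeries.coeff_mk, fallingFact_eq]
    have : (Polynomial.C ((1 : ℚ) / (Nat.factorial k))) * Polynomial.C ((1 : ℚ) / (Nat.factorial (n - k)))
        = Polynomial.C ((1 : ℚ) / (Nat.factorial n)) * (n.choose k : Polynomial ℚ) := by
      rw [← map_mul, fact_inv_mul n k hk']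
      simp [mul_comm]
    calc Polynomial.C ((1 : ℚ) / (Nat.factorial k)) * ffact (Polynomial.X : Polynomial ℚ) k *
          (Polynomial.C ((1 : ℚ) / (Nat.factorial (n - k))) * ffact (-Polynomial.X : Polynomial ℚ) (n - k))
        = (Polynomial.C ((1 : ℚ) / (Nat.factorial k)) * Polynomial.C ((1 : ℚ) / (Nat.factorial (n - k))))
            * (ffact (Polynomial.X : Polynomial ℚ) k * ffact (-Polynomial.X : Polynomial ℚ) (n - k)) := by ring
      _ = _ := by rw [this]; ring
  rw [Finset.sum_congr rfl hterm, ← Finset.mul_sum, ffact_vandermonde, add_neg_cancel]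
  rcases Nat.eq_zero_or_pos n with h | h
  · subst h; simp [ffact_zero]
  · rw [ffact_zero_left (Nat.pos_iff_ne_zero.mp h), PowerSeries.coeff_one, if_neg (Nat.pos_iff_ne_zero.mp h)]
    simp

end Aux

section Aux2
open PowerSeries

lemma Bser_eq : Bser = 1 + PowerSeries.C Polynomial.X * PowerSeries.X * DstarSer := by
  apply PowerSeries.ext
  intro n
  cases n with
  | zero =>
    simp [Bser, fallingFact, Nat.factorial]
  | succ n =>
    rw [map_add, mul_assoc, PowerSeries.coeff_C_mul]
    rw [PowerSeries.coeff_succ_X_mul]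
    simp only [Bser, DstarSer, PowerSeries.coeff_mk, fallingFact]
    rw [Finset.prod_range_succ' (fun j => Polynomial.X - Polynomial.C (j : ℚ)) n]
    have : ∀ j ∈ Finset.range n,
        (Polynomial.X - Polynomial.C (((j : ℕ) + 1 : ℕ) : ℚ)) = Polynomial.X - Polynomial.C ((j : ℚ) + 1) := by
      intro j _; push_cast; ring
    rw [Finset.prod_congr rfl this]
    have h1 : PowerSeries.coeff (R := Polynomial ℚ) (n+1) 1 = 0 := by
      rw [PowerSeries.coeff_one, if_neg (Nat.succ_ne_zero n)]
    rw [h1, zero_add, Nat.cast_zero, Polynomial.C_0, sub_zero]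
    ring

lemma map_negSub_Bser_eq :
    PowerSeries.map negSub Bser
      = 1 - PowerSeries.C Polynomial.X * PowerSeries.X
          * PowerSeries.map negSub DstarSer := by
  rw [Bser_eq, map_add, map_one, map_mul, map_mul, PowerSeries.map_C, negSub_X, PowerSeries.map_X,
    map_neg]
  ring

lemma Bser_mul_mapD : Bser * PowerSeries.map negSub DstarSer = DstarSer := by
  set a : PowerSeries (Polynomial ℚ) := PowerSeries.C Polynomial.X * PowerSeries.X
    with ha
  set D := DstarSer with hD
  set E := PowerSeries.map negSub DstarSer with hE
  have ha0 : a ≠ 0 := by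
    intro h
    have h' := congrArg (PowerSeries.coeff 1) h
    rw [ha, PowerSeries.coeff_C_mul, PowerSeries.coeff_one_X, mul_one, map_zero] at h'
    exact Polynomial.X_ne_zero h'
  have h1 : (1 + a * D) * (1 - a * E) = 1 := by
    rw [← Bser_eq, ← map_negSub_Bser_eq]; exact Bser_mul_map
  have h2 : a * (D - E - a * (D * E)) = 0 := by linear_combination h1
  have h3 : D - E - a * (D * E) = 0 := by
    rcases mul_eq_zero.mp h2 with h | h
    · exact absurd h ha0
    · exact h
  rw [Bser_eq]
  linear_combination (-1 : PowerSeries (Polynomial ℚ)) * h3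

lemma main_eq (Fstar : ℕ → Polynomial ℚ) (hFstar : egf Fstar * DstarSer = 1) :
    Bser * egf Fstar = PowerSeries.map negSub (egf Fstar) := by
  have hσ : PowerSeries.map negSub (egf Fstar) * PowerSeries.map negSub DstarSer = 1 := by
    rw [← map_mul, hFstar, map_one]
  linear_combination (PowerSeries.map negSub (egf Fstar)) * hFstar
    - (Bser * egf Fstar) * hσ + (egf Fstar * PowerSeries.map negSub (egf Fstar)) * Bser_mul_mapD

end Aux2

/-- For every `r ∈ ℕ`, `∑_{k=0}^{r} C(r,k) (x)_{r-k} F*_k(x) = F*_r(-x)` in `ℚ[x]`. -/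
theorem Fstar_symmetry_identity
    (Fstar : ℕ → Polynomial ℚ) (hFstar : egf Fstar * DstarSer = 1) :
    ∀ r : ℕ,
      ∑ k ∈ Finset.range (r + 1), (r.choose k : Polynomial ℚ) * fallingFact (r - k) * Fstar k =
        (Fstar r).comp (-Polynomial.X) := by
  intro r
  have hc := congrArg (PowerSeries.coeff r) (main_eq Fstar hFstar)
  rw [PowerSeries.coeff_mul, Finset.Nat.sum_antidiagonal_eq_sum_range_succ_mk,
    PowerSeries.coeff_map] at hc
  simp only [Bser, egf, PowerSeries.coeff_mk] at hc
  rw [map_mul, negSub_C, negSub_apply] at hc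
  have hC : (Polynomial.C ((1 : ℚ) / (Nat.factorial r))) ≠ 0 := by
    rw [Ne, Polynomial.C_eq_zero]
    exact one_div_ne_zero (Nat.cast_ne_zero.mpr (Nat.factorial_ne_zero r))
  apply mul_left_cancel₀ hC
  rw [← hc, ← Finset.sum_range_reflect
    (fun k => Polynomial.C ((1:ℚ)/(Nat.factorial k)) * fallingFact k *
      (Polynomial.C ((1:ℚ)/(Nat.factorial (r - k))) * Fstar (r - k))) (r+1),
    Finset.mul_sum]
  refine Finset.sum_congr rfl fun k hk => ?_
  rw [Finset.mem_range] at hk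
  have hk' : k ≤ r := Nat.lt_succ_iff.mp hk
  have h1 : r + 1 - 1 - k = r - k := by omega
  have h2 : r - (r - k) = k := by omega
  rw [h1, h2]
  have hcast : ((r.choose k : ℕ) : Polynomial ℚ) = Polynomial.C ((r.choose k : ℚ)) := by simp
  have hcc : Polynomial.C ((1:ℚ)/(Nat.factorial r)) * Polynomial.C ((r.choose k : ℚ))
      = Polynomial.C ((1:ℚ)/(Nat.factorial k)) * Polynomial.C ((1:ℚ)/(Nat.factorial (r - k))) := by
    rw [← map_mul, ← map_mul]
    congr 1
    rw [fact_inv_mul r k hk']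
    ring
  rw [hcast]
  linear_combination (fallingFact (r - k) * Fstar k) * hcc
end

section
/- For every integer r ≥ 2, the polynomial F*_r is even: F*_r(−x) = F*_r(x) as an identity in ℚ[x]. -/
open Polynomial PowerSeries Finset

lemma coeff_one_add_X_pow_PS (N k : ℕ) :
    PowerSeries.coeff k ((1 + PowerSeries.X : PowerSeries ℚ) ^ N) = N.choose k := by
  have h1 : ((1 + Polynomial.X : ℚ[X]) : PowerSeries ℚ) = 1 + PowerSeries.X := by
    rw [Polynomial.coe_add, Polynomial.coe_one, Polynomial.coe_X]
  rw [← h1, ← Polynomial.coe_pow, Polynomial.coeff_coe, Polynomial.coeff_one_add_X_pow]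

lemma coeff_map_Dstar (c : ℚ) (k : ℕ) :
    PowerSeries.coeff k (PowerSeries.map (Polynomial.evalRingHom c) DstarSer)
      = (1 / Nat.factorial (k+1)) * ∏ j ∈ Finset.range k, (c - (j+1)) := by
  simp [DstarSer, PowerSeries.coeff_map, Polynomial.eval_prod]

lemma prod_asc (n k : ℕ) : ∏ j ∈ Finset.range k, (((n:ℚ)+1) + j)
    = (Nat.factorial k) * ((n + k).choose k) := by
  have h : ∀ k, (n+1).ascFactorial k = ∏ j ∈ Finset.range k, (n + 1 + j) := by
    intro k
    induction k with
    | zero => simp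
    | succ k ih => rw [Finset.prod_range_succ, ← ih, Nat.ascFactorial_succ]; ring
  have h2 : ∏ j ∈ Finset.range k, (((n:ℚ)+1) + j)
      = (((n+1).ascFactorial k : ℕ) : ℚ) := by
    rw [h, Nat.cast_prod]
    apply Finset.prod_congr rfl
    intro j _; push_cast; ring
  rw [h2, Nat.ascFactorial_eq_factorial_mul_choose]
  push_cast; ring

lemma prod_desc (N k : ℕ) : ∏ j ∈ Finset.range k, ((N:ℚ) - j)
    = (Nat.factorial k) * (N.choose k) := by
  rcases le_or_gt k N with h | h
  · have hc : ∀ j ∈ Finset.range k, ((N:ℚ) - j) = ((N - j : ℕ) : ℚ) := by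
      intro j hj
      have hj' : j ≤ N := le_trans (le_of_lt (Finset.mem_range.mp hj)) h
      rw [Nat.cast_sub hj']
    rw [Finset.prod_congr rfl hc, ← Nat.cast_prod, ← Nat.descFactorial_eq_prod_range,
      Nat.descFactorial_eq_factorial_mul_choose]
    push_cast; ring
  · rw [Finset.prod_eq_zero (Finset.mem_range.mpr h) (sub_self (N:ℚ)),
      Nat.choose_eq_zero_of_lt h]
    simp

lemma lemA (n : ℕ) :
    PowerSeries.C ((n:ℚ)+1) * PowerSeries.X
        * PowerSeries.map (Polynomial.evalRingHom ((n:ℚ)+1)) DstarSer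
      = (1 + PowerSeries.X) ^ (n+1) - 1 := by
  ext k
  rw [show PowerSeries.C ((n:ℚ)+1) * PowerSeries.X
        * PowerSeries.map (Polynomial.evalRingHom ((n:ℚ)+1)) DstarSer
      = (PowerSeries.C ((n:ℚ)+1)
        * PowerSeries.map (Polynomial.evalRingHom ((n:ℚ)+1)) DstarSer) * PowerSeries.X
      by ring]
  cases k with
  | zero =>
    simp [PowerSeries.coeff_zero_eq_constantCoeff, map_pow, coeff_one_add_X_pow_PS]
  | succ k =>
    rw [PowerSeries.coeff_succ_mul_X, PowerSeries.coeff_C_mul, coeff_map_Dstar,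
      map_sub, coeff_one_add_X_pow_PS]
    have h0 : ((n:ℚ)+1) * ((1 / Nat.factorial (k+1)) * ∏ j ∈ Finset.range k, (((n:ℚ)+1) - (j+1)))
        = (1 / Nat.factorial (k+1)) * ∏ j ∈ Finset.range (k+1), (((n+1:ℕ):ℚ) - j) := by
      rw [Finset.prod_range_succ']
      push_cast
      ring
    rw [h0, prod_desc (n+1) (k+1)]
    have h1 : (PowerSeries.coeff (k+1)) (1 : PowerSeries ℚ) = 0 := by
      simp
    rw [h1]
    have h2 : (Nat.factorial (k+1) : ℚ) ≠ 0 := by exact_mod_cast (Nat.factorial_pos _).ne'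
    field_simp
    rw [sub_zero]

lemma lemB (n : ℕ) :
    (1 + PowerSeries.X) ^ (n+1)
      * (1 - PowerSeries.C ((n:ℚ)+1) * PowerSeries.X
          * PowerSeries.map (Polynomial.evalRingHom (-((n:ℚ)+1))) DstarSer)
      = 1 := by
  have h0 : ((1 - PowerSeries.X : PowerSeries ℚ)^(n+1)) * (PowerSeries.invOneSubPow ℚ (n+1)).val = 1 := by
    rw [← PowerSeries.invOneSubPow_inv_eq_one_sub_pow]
    exact (PowerSeries.invOneSubPow ℚ (n+1)).inv_val
  have h1 := congrArg (PowerSeries.rescale (-1 : ℚ)) h0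
  rw [map_mul, map_one, map_pow, map_sub, map_one, PowerSeries.rescale_neg_one_X,
    sub_neg_eq_add] at h1
  have h2 : PowerSeries.rescale (-1 : ℚ) (PowerSeries.invOneSubPow ℚ (n+1)).val
      = 1 - PowerSeries.C ((n:ℚ)+1) * PowerSeries.X
          * PowerSeries.map (Polynomial.evalRingHom (-((n:ℚ)+1))) DstarSer := by
    rw [PowerSeries.invOneSubPow_val_succ_eq_mk_add_choose, PowerSeries.rescale_mk]
    ext k
    rw [PowerSeries.coeff_mk, map_sub]
    rw [show PowerSeries.C ((n:ℚ)+1) * PowerSeries.X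
          * PowerSeries.map (Polynomial.evalRingHom (-((n:ℚ)+1))) DstarSer
        = (PowerSeries.C ((n:ℚ)+1)
          * PowerSeries.map (Polynomial.evalRingHom (-((n:ℚ)+1))) DstarSer) * PowerSeries.X
        by ring]
    cases k with
    | zero => simp
    | succ k =>
      rw [PowerSeries.coeff_succ_mul_X, PowerSeries.coeff_C_mul, coeff_map_Dstar]
      have h3 : ∀ j ∈ Finset.range k, (-((n:ℚ)+1) - (j+1)) = (-1) * ((n:ℚ) + 1 + 1 + j) := by
        intro j _; push_cast; ring
      rw [Finset.prod_congr rfl h3, Finset.prod_mul_distrib, Finset.prod_const]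
      have hprod : ∏ j ∈ Finset.range (k+1), ((n:ℚ) + 1 + j)
          = (∏ j ∈ Finset.range k, ((n:ℚ) + 1 + 1 + j)) * ((n:ℚ) + 1) := by
        rw [Finset.prod_range_succ']
        congr 1
        · apply Finset.prod_congr rfl; intro j _; push_cast; ring
        · push_cast; ring
      have h4 : ((n:ℚ)+1) * ((1 / Nat.factorial (k+1)) * ((-1)^(Finset.range k).card
            * ∏ j ∈ Finset.range k, ((n:ℚ) + 1 + 1 + j)))
          = (-1)^k * ((1 / Nat.factorial (k+1))
            * ∏ j ∈ Finset.range (k+1), ((n:ℚ) + 1 + j)) := by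
        rw [Finset.card_range, hprod]; ring
      rw [h4]
      have h5 : ∏ j ∈ Finset.range (k+1), ((n:ℚ) + 1 + j)
          = (Nat.factorial (k+1)) * ((n + (k+1)).choose (k+1)) := prod_asc n (k+1)
      rw [h5]
      have h6 : (n + (k+1)).choose (k+1) = (n + (k+1)).choose n := by
        rw [← Nat.choose_symm (by omega)]
        congr 1
        omega
      have h2 : (Nat.factorial (k+1) : ℚ) ≠ 0 := by exact_mod_cast (Nat.factorial_pos _).ne'
      rw [h6]
      have h7 : (PowerSeries.coeff (k+1)) (1 : PowerSeries ℚ) = 0 := by simp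
      rw [h7]
      field_simp
      ring
  rw [h2] at h1
  exact h1

lemma eval_symm (Fstar : ℕ → Polynomial ℚ) (hFstar : egf Fstar * DstarSer = 1)
    (n r : ℕ) (hr : 2 ≤ r) :
    (Fstar r).eval (-((n:ℚ)+1)) = (Fstar r).eval ((n:ℚ)+1) := by
  set a : ℚ := (n:ℚ)+1 with ha
  set Dp := PowerSeries.map (Polynomial.evalRingHom a) DstarSer with hDp
  set Dm := PowerSeries.map (Polynomial.evalRingHom (-a)) DstarSer with hDm
  set Gp := PowerSeries.map (Polynomial.evalRingHom a) (egf Fstar) with hGp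
  set Gm := PowerSeries.map (Polynomial.evalRingHom (-a)) (egf Fstar) with hGm
  have hp : Gp * Dp = 1 := by
    rw [hGp, hDp, ← map_mul, hFstar, map_one]
  have hm : Gm * Dm = 1 := by
    rw [hGm, hDm, ← map_mul, hFstar, map_one]
  have hA := lemA n
  have hB := lemB n
  rw [← ha] at hA hB
  -- (1+X)^(n+1) * Dm = Dp
  have hD : (1 + PowerSeries.X) ^ (n+1) * Dm = Dp := by
    have h1 : PowerSeries.C a * PowerSeries.X * ((1 + PowerSeries.X) ^ (n+1) * Dm)
        = PowerSeries.C a * PowerSeries.X * Dp := by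
      rw [hA]
      have : (1 + PowerSeries.X) ^ (n+1)
          * (1 - PowerSeries.C a * PowerSeries.X * Dm)
          = (1 + PowerSeries.X) ^ (n+1)
            - PowerSeries.C a * PowerSeries.X * ((1 + PowerSeries.X) ^ (n+1) * Dm) := by
        ring
      rw [this] at hB
      linear_combination -hB
    have hX : (PowerSeries.C a * PowerSeries.X : PowerSeries ℚ) ≠ 0 := by
      intro h
      have := congrArg (PowerSeries.coeff 1) h
      rw [PowerSeries.coeff_C_mul] at this
      simp [PowerSeries.coeff_X, ha] at this
      linarith [Nat.cast_nonneg (α := ℚ) n]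
    exact mul_left_cancel₀ hX h1
  have hGmGp : Gm = Gp * (1 + PowerSeries.X) ^ (n+1) := by
    calc Gm = Gm * (Gp * Dp) := by rw [hp, mul_one]
    _ = Gp * (1 + PowerSeries.X) ^ (n+1) * (Gm * Dm) := by rw [← hD]; ring
    _ = Gp * (1 + PowerSeries.X) ^ (n+1) := by rw [hm, mul_one]
  have hdiff : Gm - Gp = PowerSeries.C a * PowerSeries.X := by
    calc Gm - Gp = Gp * ((1 + PowerSeries.X) ^ (n+1) - 1) := by rw [hGmGp]; ring
    _ = PowerSeries.C a * PowerSeries.X * (Gp * Dp) := by rw [← hA]; ring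
    _ = PowerSeries.C a * PowerSeries.X := by rw [hp, mul_one]
  have hc := congrArg (PowerSeries.coeff r) hdiff
  rw [map_sub, PowerSeries.coeff_C_mul, PowerSeries.coeff_X,
    if_neg (by omega : ¬ r = 1), mul_zero, sub_eq_zero] at hc
  have hcoeff : ∀ c : ℚ, PowerSeries.coeff r (PowerSeries.map (Polynomial.evalRingHom c) (egf Fstar))
      = (1 / Nat.factorial r) * (Fstar r).eval c := by
    intro c
    simp [egf, PowerSeries.coeff_map]
  rw [hGm, hGp, hcoeff, hcoeff] at hc
  have hfac : (Nat.factorial r : ℚ) ≠ 0 := by exact_mod_cast (Nat.factorial_pos _).ne'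
  field_simp at hc
  exact hc

/-- For every `r ≥ 2`, the polynomial `F*_r` is even: `F*_r(-x) = F*_r(x)` in `ℚ[x]`. -/
theorem Fstar_even (Fstar : ℕ → Polynomial ℚ) (hFstar : egf Fstar * DstarSer = 1) :
    ∀ r : ℕ, 2 ≤ r → (Fstar r).comp (-Polynomial.X) = Fstar r := by
  intro r hr
  have hzero : (Fstar r).comp (-Polynomial.X) - Fstar r = 0 := by
    apply Polynomial.eq_zero_of_infinite_isRoot
    apply Set.Infinite.mono (s := Set.range (fun n : ℕ => ((n:ℚ)+1)))
    · rintro x ⟨n, rfl⟩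
      simp only [Set.mem_setOf_eq, Polynomial.IsRoot, Polynomial.eval_sub,
        Polynomial.eval_comp, Polynomial.eval_neg, Polynomial.eval_X]
      rw [eval_symm Fstar hFstar n r hr, sub_self]
    · apply Set.infinite_range_of_injective
      intro a b hab
      have hab' : ((a:ℚ)+1) = ((b:ℚ)+1) := hab
      have : (a : ℚ) = b := by linarith
      exact_mod_cast this
  have := sub_eq_zero.mp hzero
  exact this
end

section
/- For every integer r ≥ 2, the polynomial F_r satisfies F_r(−x) = (−1)^r F_r(x) as an identity in ℚ[x]; that is, F_r is an even polynomial when r is even and an odd polynomial when r is odd. -/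
open Polynomial PowerSeries Finset

noncomputable def phiP : Polynomial ℚ →+* Polynomial ℚ :=
  Polynomial.eval₂RingHom Polynomial.C (-Polynomial.X)

noncomputable def Eser : PowerSeries (Polynomial ℚ) :=
  PowerSeries.mk fun r =>
    Polynomial.C ((1 : ℚ) / (Nat.factorial r)) *
      ∏ j ∈ Finset.range r, (1 - Polynomial.C ((j : ℚ)) * Polynomial.X)

noncomputable def Ehat : PowerSeries (Polynomial ℚ) :=
  PowerSeries.rescale (-1) (PowerSeries.map phiP Eser)

lemma coeff_Ehat (r : ℕ) :
    (PowerSeries.coeff r) Ehat =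
      (-1 : Polynomial ℚ) ^ r * (Polynomial.C ((1 : ℚ) / (Nat.factorial r)) *
        ∏ j ∈ Finset.range r, (1 + Polynomial.C ((j : ℚ)) * Polynomial.X)) := by
  rw [Ehat, PowerSeries.coeff_rescale, PowerSeries.coeff_map, Eser, PowerSeries.coeff_mk]
  simp only [phiP, Polynomial.coe_eval₂RingHom, Polynomial.eval₂_mul, Polynomial.eval₂_C,
    Polynomial.eval₂_finset_prod, Polynomial.eval₂_sub, Polynomial.eval₂_one, Polynomial.eval₂_X,
    mul_neg, sub_neg_eq_add]

lemma fact_step (n : ℕ) :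
    ((n : ℚ) + 1) * ((1 : ℚ) / (Nat.factorial (n + 1))) = 1 / Nat.factorial n := by
  rw [Nat.factorial_succ]
  have h1 : ((n : ℚ) + 1) ≠ 0 := by positivity
  have h2 : ((Nat.factorial n : ℚ)) ≠ 0 := by
    exact_mod_cast Nat.cast_ne_zero.mpr (Nat.factorial_ne_zero n)
  push_cast
  field_simp

lemma cast_succ_C (m : ℕ) : ((m : Polynomial ℚ) + 1) = Polynomial.C ((m : ℚ) + 1) := by
  rw [map_add, map_one, map_natCast]

lemma dE_coeff (m : ℕ) :
    (PowerSeries.coeff m) (PowerSeries.derivative (Polynomial ℚ) Eser) =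
      (1 - Polynomial.C ((m : ℚ)) * Polynomial.X) * (PowerSeries.coeff m) Eser := by
  rw [PowerSeries.coeff_derivative, Eser, PowerSeries.coeff_mk, PowerSeries.coeff_mk,
    Finset.prod_range_succ, cast_succ_C]
  calc Polynomial.C ((1:ℚ) / (Nat.factorial (m+1))) *
        ((∏ j ∈ Finset.range m, (1 - Polynomial.C ((j : ℚ)) * Polynomial.X)) *
          (1 - Polynomial.C ((m : ℚ)) * Polynomial.X)) * Polynomial.C ((m : ℚ) + 1)
      = (1 - Polynomial.C ((m : ℚ)) * Polynomial.X) *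
        (Polynomial.C (((m : ℚ) + 1) * ((1:ℚ) / (Nat.factorial (m+1)))) *
          ∏ j ∈ Finset.range m, (1 - Polynomial.C ((j : ℚ)) * Polynomial.X)) := by
        rw [map_mul]; ring
    _ = _ := by rw [fact_step]

lemma dEhat_coeff (m : ℕ) :
    (PowerSeries.coeff m) (PowerSeries.derivative (Polynomial ℚ) Ehat) =
      -((1 + Polynomial.C ((m : ℚ)) * Polynomial.X) * (PowerSeries.coeff m) Ehat) := by
  rw [PowerSeries.coeff_derivative, coeff_Ehat, coeff_Ehat,
    Finset.prod_range_succ, cast_succ_C]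
  have : Polynomial.C ((1:ℚ) / (Nat.factorial (m+1))) * Polynomial.C ((m : ℚ) + 1)
      = Polynomial.C ((1:ℚ) / (Nat.factorial m)) := by
    rw [← map_mul, mul_comm, fact_step]
  calc (-1 : Polynomial ℚ) ^ (m+1) * (Polynomial.C ((1:ℚ) / (Nat.factorial (m+1))) *
        ((∏ j ∈ Finset.range m, (1 + Polynomial.C ((j : ℚ)) * Polynomial.X)) *
          (1 + Polynomial.C ((m : ℚ)) * Polynomial.X))) * Polynomial.C ((m : ℚ) + 1)
      = -((1 + Polynomial.C ((m : ℚ)) * Polynomial.X) *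
          ((-1 : Polynomial ℚ) ^ m * ((Polynomial.C ((1:ℚ) / (Nat.factorial (m+1))) * Polynomial.C ((m : ℚ) + 1)) *
            ∏ j ∈ Finset.range m, (1 + Polynomial.C ((j : ℚ)) * Polynomial.X)))) := by
        rw [pow_succ]; ring
    _ = _ := by rw [this]



lemma ode_E :
    (1 + PowerSeries.C (R := Polynomial ℚ) Polynomial.X * PowerSeries.X) *
      (PowerSeries.derivative (Polynomial ℚ) Eser) = Eser := by
  ext n
  rw [add_mul, one_mul, map_add, mul_assoc, PowerSeries.coeff_C_mul]
  cases n with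
  | zero =>
      rw [PowerSeries.coeff_zero_X_mul, dE_coeff]
      simp
  | succ n =>
      rw [PowerSeries.coeff_succ_X_mul, dE_coeff, PowerSeries.coeff_derivative,
        Nat.cast_succ, cast_succ_C]
      ring

lemma ode_Ehat :
    (1 + PowerSeries.C (R := Polynomial ℚ) Polynomial.X * PowerSeries.X) *
      (PowerSeries.derivative (Polynomial ℚ) Ehat) = -Ehat := by
  ext n
  rw [add_mul, one_mul, map_add, mul_assoc, PowerSeries.coeff_C_mul, map_neg]
  cases n with
  | zero =>
      rw [PowerSeries.coeff_zero_X_mul, dEhat_coeff]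
      simp
  | succ n =>
      rw [PowerSeries.coeff_succ_X_mul, dEhat_coeff, PowerSeries.coeff_derivative,
        Nat.cast_succ, cast_succ_C]
      ring

lemma Ehat_mul_E : Ehat * Eser = 1 := by
  set A := 1 + PowerSeries.C (R := Polynomial ℚ) Polynomial.X * PowerSeries.X with hA
  have hA0 : A ≠ 0 := by
    intro h
    have := congrArg (PowerSeries.constantCoeff (R := Polynomial ℚ)) h
    simp [hA] at this
  have hd : PowerSeries.derivative (Polynomial ℚ) (Ehat * Eser) = 0 := by
    have hmul : A * (PowerSeries.derivative (Polynomial ℚ) (Ehat * Eser)) = 0 := by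
      have hl : PowerSeries.derivative (Polynomial ℚ) (Ehat * Eser) =
          Ehat * PowerSeries.derivative (Polynomial ℚ) Eser +
            Eser * PowerSeries.derivative (Polynomial ℚ) Ehat := by
        show PowerSeries.derivativeFun (Ehat * Eser) = _
        rw [PowerSeries.derivativeFun_mul, smul_eq_mul, smul_eq_mul]
        rfl
      rw [hl, mul_add]
      calc A * (Ehat * PowerSeries.derivative (Polynomial ℚ) Eser) +
            A * (Eser * PowerSeries.derivative (Polynomial ℚ) Ehat)
          = Ehat * (A * PowerSeries.derivative (Polynomial ℚ) Eser) +
            Eser * (A * PowerSeries.derivative (Polynomial ℚ) Ehat) := by ring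
        _ = 0 := by rw [ode_E, ode_Ehat]; ring
    exact (mul_eq_zero.mp hmul).resolve_left hA0
  apply PowerSeries.derivative.ext
  · rw [hd]
    exact PowerSeries.derivativeFun_one.symm
  · rw [map_mul, map_one]
    have hE0 : PowerSeries.constantCoeff (R := Polynomial ℚ) Eser = 1 := by
      rw [← PowerSeries.coeff_zero_eq_constantCoeff_apply, Eser, PowerSeries.coeff_mk]; simp
    have hH0 : PowerSeries.constantCoeff (R := Polynomial ℚ) Ehat = 1 := by
      rw [← PowerSeries.coeff_zero_eq_constantCoeff_apply, coeff_Ehat]; simp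
    rw [hE0, hH0, mul_one]

lemma E_eq : Eser = 1 + PowerSeries.X * Dser := by
  ext n
  cases n with
  | zero =>
      rw [map_add, PowerSeries.coeff_zero_X_mul, Eser, PowerSeries.coeff_mk]
      simp
  | succ n =>
      rw [map_add, PowerSeries.coeff_succ_X_mul, Eser, PowerSeries.coeff_mk, Dser,
        PowerSeries.coeff_mk, Finset.prod_range_succ', PowerSeries.coeff_one]
      simp [Nat.cast_succ]

noncomputable def tau : PowerSeries (Polynomial ℚ) →+* PowerSeries (Polynomial ℚ) :=
  (PowerSeries.rescale (-1 : Polynomial ℚ)).comp (PowerSeries.map phiP)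

lemma tau_X : tau PowerSeries.X = -PowerSeries.X := by
  rw [tau, RingHom.comp_apply, PowerSeries.map_X]
  apply PowerSeries.ext
  intro n
  rw [PowerSeries.coeff_rescale, map_neg, PowerSeries.coeff_X]
  split_ifs with h
  · subst h; norm_num
  · simp

lemma tau_E : tau Eser = Ehat := rfl

lemma coeff_tau (f : PowerSeries (Polynomial ℚ)) (n : ℕ) :
    PowerSeries.coeff n (tau f) = (-1) ^ n * phiP (PowerSeries.coeff n f) := by
  rw [tau, RingHom.comp_apply, PowerSeries.coeff_rescale, PowerSeries.coeff_map]

/-- For every `r ≥ 2`, `F_r(-x) = (-1)^r F_r(x)` in `ℚ[x]`: `F_r` has the parity of `r`. -/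
theorem F_parity (F : ℕ → Polynomial ℚ) (hF : egf F * Dser = 1) :
    ∀ r : ℕ, 2 ≤ r → (F r).comp (-Polynomial.X) = (-1) ^ r * F r := by
  have hXD : egf F * (Eser - 1) = PowerSeries.X := by
    have h1 : Eser - 1 = PowerSeries.X * Dser := by rw [E_eq]; ring
    rw [h1]
    calc egf F * (PowerSeries.X * Dser) = PowerSeries.X * (egf F * Dser) := by ring
      _ = PowerSeries.X := by rw [hF, mul_one]
  have h2 : tau (egf F) * (Ehat - 1) = -PowerSeries.X := by
    have := congrArg tau hXD
    rwa [map_mul, map_sub, map_one, tau_E, tau_X] at this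
  have l1 : tau (egf F) * (Eser - 1) = PowerSeries.X * Eser := by
    have h3 : (tau (egf F) * (Ehat - 1)) * Eser = -PowerSeries.X * Eser := by rw [h2]
    have h4 : (tau (egf F) * (Ehat - 1)) * Eser = tau (egf F) * (1 - Eser) := by
      calc (tau (egf F) * (Ehat - 1)) * Eser
          = tau (egf F) * (Ehat * Eser - Eser) := by ring
        _ = tau (egf F) * (1 - Eser) := by rw [Ehat_mul_E]
    have h5 : tau (egf F) * (1 - Eser) = -PowerSeries.X * Eser := h4 ▸ h3
    linear_combination -h5
  have l2 : (egf F + PowerSeries.X) * (Eser - 1) = PowerSeries.X * Eser := by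
    linear_combination hXD
  have hne : Eser - 1 ≠ 0 := by
    intro h
    have := congrArg (PowerSeries.coeff (R := Polynomial ℚ) 1) h
    rw [map_sub, PowerSeries.coeff_one, Eser, PowerSeries.coeff_mk] at this
    simp at this
  have hG : tau (egf F) = egf F + PowerSeries.X :=
    mul_right_cancel₀ hne (l1.trans l2.symm)
  intro r hr
  have hc := congrArg (PowerSeries.coeff (R := Polynomial ℚ) r) hG
  rw [coeff_tau, map_add, PowerSeries.coeff_X, if_neg (by omega), add_zero, egf,
    PowerSeries.coeff_mk, map_mul] at hc
  have hphiC : phiP (Polynomial.C ((1 : ℚ) / (Nat.factorial r))) =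
      Polynomial.C ((1 : ℚ) / (Nat.factorial r)) := by
    simp [phiP]
  rw [hphiC] at hc
  have hc2 : Polynomial.C ((1 : ℚ) / (Nat.factorial r)) * ((-1) ^ r * phiP (F r)) =
      Polynomial.C ((1 : ℚ) / (Nat.factorial r)) * F r := by
    rw [← hc]; ring
  have hCne : (Polynomial.C ((1 : ℚ) / (Nat.factorial r)) : Polynomial ℚ) ≠ 0 := by
    rw [Polynomial.C_ne_zero]
    positivity
  have hpf : (-1 : Polynomial ℚ) ^ r * phiP (F r) = F r := mul_left_cancel₀ hCne hc2
  have hcomp : (F r).comp (-Polynomial.X) = phiP (F r) := rfl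
  have hsq : ((-1 : Polynomial ℚ) ^ r) * ((-1 : Polynomial ℚ) ^ r) = 1 := by
    rw [← pow_add]
    exact Even.neg_one_pow ⟨r, rfl⟩
  calc (F r).comp (-Polynomial.X) = phiP (F r) := hcomp
    _ = ((-1 : Polynomial ℚ) ^ r * (-1 : Polynomial ℚ) ^ r) * phiP (F r) := by rw [hsq, one_mul]
    _ = (-1) ^ r * ((-1 : Polynomial ℚ) ^ r * phiP (F r)) := by ring
    _ = (-1) ^ r * F r := by rw [hpf]
end

section
/- Let f be a polynomial with rational coefficients of degree d. Then for every rational n, S_f(n) = I_f(n) + ∑_{r=1}^{d+1} (B_r/r!) · (f^{(r−1)}(n) − f^{(r−1)}(0)), where I_f is the antiderivative of f with I_f(0) = 0 (so I_f(n) = ∫_0^n f(t) dt), f^{(r−1)} denotes the (r−1)-st derivative of f, and B_r are the Bernoulli numbers with B_1 = −1/2. (This is the Euler–Maclaurin formula for polynomials, obtained as the x → 0⁺ case of the generalized summation formula.) -/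
open Finset

namespace EMaux

/-- Key monomial identity: the Bernoulli polynomial `B_{p+1}/(p+1)` is the Euler–Maclaurin
candidate sum for `X^p`. -/
lemma monomial_key (p : ℕ) :
    Polynomial.C (((p : ℚ)+1)⁻¹) * Polynomial.X ^ (p+1)
      + ∑ r ∈ Icc 1 (p+1), Polynomial.C (bernoulli r / (Nat.factorial r : ℚ)) *
          Polynomial.derivative^[r-1] (Polynomial.X ^ p : Polynomial ℚ)
    = Polynomial.C (((p : ℚ)+1)⁻¹) * Polynomial.bernoulli (p+1) := by
  rw [Polynomial.bernoulli_def, Finset.mul_sum, Finset.sum_range_succ]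
  have h0 : Polynomial.C (((p : ℚ)+1)⁻¹) *
      Polynomial.monomial (p+1) (bernoulli (p+1-(p+1)) * (p+1).choose (p+1))
      = Polynomial.C (((p : ℚ)+1)⁻¹) * Polynomial.X ^ (p+1) := by
    simp [← Polynomial.C_mul_X_pow_eq_monomial]
  rw [h0, add_comm]
  congr 1
  rw [← Finset.sum_range_reflect, show Icc 1 (p+1) = Ico 1 (p+2) from by ext x; simp only [Finset.mem_Icc, Finset.mem_Ico]; omega,
    Finset.sum_Ico_eq_sum_range]
  simp only [show p + 2 - 1 = p + 1 from rfl]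
  apply Finset.sum_congr rfl
  intro i hi
  rw [Finset.mem_range] at hi
  have hip : i ≤ p := Nat.lt_succ_iff.mp hi
  simp only [show ∀ i:ℕ, 1 + i - 1 = i from fun i => by omega, show p + 1 - 1 = p from rfl]
  rw [Polynomial.iterate_derivative_X_pow_eq_C_mul]
  have e1 : p + 1 - (p - i) = i + 1 := by omega
  have e4 : (1 + i : ℕ) = i + 1 := by omega
  have e2 : p - i = p + 1 - (i+1) := by omega
  have e3 : (p+1).choose (p - i) = (p+1).choose (i+1) := by
    rw [e2, Nat.choose_symm (by omega)]
  rw [e1, e3, e4, ← Polynomial.C_mul_X_pow_eq_monomial, ← mul_assoc, ← mul_assoc, ← Polynomial.C_mul,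
    ← Polynomial.C_mul]
  congr 2
  have key : ((p+1) * Nat.descFactorial p i : ℕ) = ((i+1).factorial * (p+1).choose (i+1) : ℕ) := by
    rw [← Nat.succ_descFactorial_succ, Nat.descFactorial_eq_factorial_mul_choose]
  have key' : ((p:ℚ)+1) * (Nat.descFactorial p i : ℚ) =
      ((i+1).factorial : ℚ) * ((p+1).choose (i+1) : ℚ) := by
    exact_mod_cast congrArg (Nat.cast : ℕ → ℚ) key
  have hne : ((i+1).factorial : ℚ) ≠ 0 := by positivity
  have hne2 : ((p:ℚ)+1) ≠ 0 := by positivity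
  field_simp
  linear_combination bernoulli (i+1) * key'

lemma delta_bernoulli (p : ℕ) :
    (Polynomial.bernoulli (p+1)).comp (Polynomial.X + 1) - Polynomial.bernoulli (p+1)
      = (Polynomial.C ((p:ℚ)+1)) * Polynomial.X ^ p := by
  apply Polynomial.funext
  intro x
  have h := Polynomial.bernoulli_eval_one_add (p+1) x
  simp only [Polynomial.eval_sub, Polynomial.eval_comp, Polynomial.eval_add, Polynomial.eval_X,
    Polynomial.eval_one, Polynomial.eval_mul, Polynomial.eval_C, Polynomial.eval_pow]
  rw [add_comm x 1] at *
  rw [h]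
  push_cast
  ring

/-- Δ of the p-th "Bernoulli antiderivative" is X^p. -/
lemma delta_psi (p : ℕ) :
    (Polynomial.C (((p : ℚ)+1)⁻¹) * Polynomial.X ^ (p+1)
      + ∑ r ∈ Icc 1 (p+1), Polynomial.C (bernoulli r / (Nat.factorial r : ℚ)) *
          Polynomial.derivative^[r-1] (Polynomial.X ^ p : Polynomial ℚ)).comp (Polynomial.X + 1)
    - (Polynomial.C (((p : ℚ)+1)⁻¹) * Polynomial.X ^ (p+1)
      + ∑ r ∈ Icc 1 (p+1), Polynomial.C (bernoulli r / (Nat.factorial r : ℚ)) *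
          Polynomial.derivative^[r-1] (Polynomial.X ^ p : Polynomial ℚ))
    = Polynomial.X ^ p := by
  rw [monomial_key, Polynomial.mul_comp, Polynomial.C_comp, ← mul_sub, delta_bernoulli,
    ← mul_assoc, ← Polynomial.C_mul]
  have h1 : (((p:ℚ)+1)⁻¹ * ((p:ℚ)+1)) = 1 := by field_simp
  rw [h1, Polynomial.C_1, one_mul]

lemma trunc (p N : ℕ) :
    ∑ r ∈ Icc 1 (N+1), Polynomial.C (bernoulli r / (Nat.factorial r : ℚ)) *
        Polynomial.derivative^[r-1] (Polynomial.X ^ p : Polynomial ℚ)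
    = ∑ r ∈ Icc 1 (min p N + 1), Polynomial.C (bernoulli r / (Nat.factorial r : ℚ)) *
        Polynomial.derivative^[r-1] (Polynomial.X ^ p : Polynomial ℚ) := by
  symm
  apply Finset.sum_subset
  · exact Finset.Icc_subset_Icc_right (by omega)
  · intro r hr hr'
    simp only [Finset.mem_Icc] at hr hr'
    have hnd : (Polynomial.X ^ p : Polynomial ℚ).natDegree < r - 1 := by
      rw [Polynomial.natDegree_X_pow]; omega
    rw [Polynomial.iterate_derivative_eq_zero hnd, mul_zero]

lemma delta_psiN (p N : ℕ) (hp : p ≤ N) :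
    (Polynomial.C (((p : ℚ)+1)⁻¹) * Polynomial.X ^ (p+1)
      + ∑ r ∈ Icc 1 (N+1), Polynomial.C (bernoulli r / (Nat.factorial r : ℚ)) *
          Polynomial.derivative^[r-1] (Polynomial.X ^ p : Polynomial ℚ)).comp (Polynomial.X + 1)
    - (Polynomial.C (((p : ℚ)+1)⁻¹) * Polynomial.X ^ (p+1)
      + ∑ r ∈ Icc 1 (N+1), Polynomial.C (bernoulli r / (Nat.factorial r : ℚ)) *
          Polynomial.derivative^[r-1] (Polynomial.X ^ p : Polynomial ℚ))
    = Polynomial.X ^ p := by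
  have hmin : min p N = p := min_eq_left hp
  rw [trunc p N, hmin]
  exact delta_psi p

lemma sum_comp' {ι : Type*} (s : Finset ι) (g : ι → Polynomial ℚ) (q : Polynomial ℚ) :
    (∑ i ∈ s, g i).comp q = ∑ i ∈ s, (g i).comp q :=
  map_sum (Polynomial.compRingHom q) g s

end EMaux

/-- **Euler–Maclaurin formula for polynomials**: if `f` has degree `d`, `S` is the fractional
sum of `f` (the unique polynomial with `S(0) = 0` and `S(X+1) - S(X) = f(X)`), and `I` is the
antiderivative of `f` with `I(0) = 0`, then for every rational `n`,
`S(n) = I(n) + ∑_{r=1}^{d+1} (B_r/r!) (f^{(r-1)}(n) - f^{(r-1)}(0))`. -/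
theorem euler_maclaurin_for_polynomials
    (f : Polynomial ℚ) (d : ℕ) (hd : f.natDegree = d)
    (S : Polynomial ℚ) (hS0 : S.eval 0 = 0)
    (hS : S.comp (Polynomial.X + 1) - S = f)
    (I : Polynomial ℚ) (hI0 : I.eval 0 = 0) (hI : I.derivative = f)
    (n : ℚ) :
    S.eval n = I.eval n +
      ∑ r ∈ Finset.Icc 1 (d + 1),
        bernoulli r / (Nat.factorial r : ℚ) *
          ((Polynomial.derivative^[r - 1] f).eval n -
            (Polynomial.derivative^[r - 1] f).eval 0) := by
  classical
  set Φ : Polynomial ℚ := ∑ r ∈ Icc 1 (d+1),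
      Polynomial.C (bernoulli r / (Nat.factorial r : ℚ)) * Polynomial.derivative^[r-1] f with hΦdef
  set a : ℕ → ℚ := fun p => f.coeff p with ha
  have hdeg : f.natDegree < d + 1 := by omega
  have hf : f = ∑ p ∈ range (d+1), Polynomial.C (a p) * Polynomial.X ^ p := by
    conv_lhs => rw [f.as_sum_range' (d+1) hdeg]
    simp [Polynomial.C_mul_X_pow_eq_monomial, ha]
  set J : Polynomial ℚ := ∑ p ∈ range (d+1),
      Polynomial.C (a p * ((p:ℚ)+1)⁻¹) * Polynomial.X ^ (p+1) with hJdef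
  have hJ : Polynomial.derivative J = f := by
    rw [hJdef, Polynomial.derivative_sum]
    conv_rhs => rw [hf]
    apply Finset.sum_congr rfl
    intro p _
    rw [Polynomial.derivative_C_mul, Polynomial.derivative_X_pow]
    push_cast
    rw [← mul_assoc, ← Polynomial.C_mul]
    congr 1
    have hne : ((p:ℚ)+1) ≠ 0 := by positivity
    field_simp
  -- I and J differ by a constant
  have hIJc : I - J = Polynomial.C ((I - J).coeff 0) := by
    apply Polynomial.eq_C_of_derivative_eq_zero
    rw [Polynomial.derivative_sub, hI, hJ, sub_self]
  -- Φ in terms of monomials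
  have hΦ : Φ = ∑ p ∈ range (d+1), Polynomial.C (a p) *
      (∑ r ∈ Icc 1 (d+1), Polynomial.C (bernoulli r / (Nat.factorial r : ℚ)) *
        Polynomial.derivative^[r-1] (Polynomial.X ^ p : Polynomial ℚ)) := by
    rw [hΦdef]
    calc ∑ r ∈ Icc 1 (d+1),
          Polynomial.C (bernoulli r / (Nat.factorial r : ℚ)) * Polynomial.derivative^[r-1] f
        = ∑ r ∈ Icc 1 (d+1), ∑ p ∈ range (d+1), Polynomial.C (a p) *
            (Polynomial.C (bernoulli r / (Nat.factorial r : ℚ)) *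
              Polynomial.derivative^[r-1] (Polynomial.X ^ p : Polynomial ℚ)) := by
          apply Finset.sum_congr rfl
          intro r _
          conv_lhs => rw [hf]
          rw [Polynomial.iterate_derivative_sum, Finset.mul_sum]
          apply Finset.sum_congr rfl
          intro p _
          rw [Polynomial.iterate_derivative_C_mul]
          ring
      _ = ∑ p ∈ range (d+1), ∑ r ∈ Icc 1 (d+1), Polynomial.C (a p) *
            (Polynomial.C (bernoulli r / (Nat.factorial r : ℚ)) *
              Polynomial.derivative^[r-1] (Polynomial.X ^ p : Polynomial ℚ)) :=
          Finset.sum_comm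
      _ = _ := by
          apply Finset.sum_congr rfl
          intro p _
          rw [Finset.mul_sum]
  -- J + Φ as a sum of Bernoulli antiderivatives
  have hJΦ : J + Φ = ∑ p ∈ range (d+1), Polynomial.C (a p) *
      (Polynomial.C (((p : ℚ)+1)⁻¹) * Polynomial.X ^ (p+1)
        + ∑ r ∈ Icc 1 (d+1), Polynomial.C (bernoulli r / (Nat.factorial r : ℚ)) *
            Polynomial.derivative^[r-1] (Polynomial.X ^ p : Polynomial ℚ)) := by
    rw [hJdef, hΦ, ← Finset.sum_add_distrib]
    apply Finset.sum_congr rfl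
    intro p _
    rw [mul_add, Polynomial.C_mul, mul_assoc]
  -- Δ(J + Φ) = f
  have hΔJΦ : (J + Φ).comp (Polynomial.X + 1) - (J + Φ) = f := by
    rw [hJΦ, EMaux.sum_comp', ← Finset.sum_sub_distrib]
    conv_rhs => rw [hf]
    apply Finset.sum_congr rfl
    intro p hp
    rw [Finset.mem_range] at hp
    rw [Polynomial.mul_comp, Polynomial.C_comp, ← mul_sub,
      EMaux.delta_psiN p d (by omega)]
  -- Δ(I + Φ) = f
  have hΔIΦ : (I + Φ).comp (Polynomial.X + 1) - (I + Φ) = f := by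
    have hI' : I = J + Polynomial.C ((I - J).coeff 0) := by
      rw [← hIJc]; ring
    calc (I + Φ).comp (Polynomial.X + 1) - (I + Φ)
        = ((J + Φ).comp (Polynomial.X + 1) - (J + Φ))
          + ((Polynomial.C ((I - J).coeff 0)).comp (Polynomial.X + 1)
              - Polynomial.C ((I - J).coeff 0)) := by
          conv_lhs => rw [hI']
          simp only [Polynomial.add_comp, Polynomial.C_comp]
          ring
      _ = f := by rw [hΔJΦ, Polynomial.C_comp, sub_self, add_zero]
  -- uniqueness: S = I + Φ - C (Φ.eval 0)
  set G : Polynomial ℚ := I + Φ - Polynomial.C (Φ.eval 0) with hGdef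
  set R : Polynomial ℚ := S - G with hRdef
  have hΔR : R.comp (Polynomial.X + 1) = R := by
    have : R.comp (Polynomial.X + 1) - R
        = (S.comp (Polynomial.X + 1) - S) - ((I + Φ).comp (Polynomial.X + 1) - (I + Φ)) := by
      rw [hRdef, hGdef]
      simp only [Polynomial.sub_comp, Polynomial.add_comp, Polynomial.C_comp]
      ring
    rw [hS, hΔIΦ, sub_self] at this
    exact sub_eq_zero.mp this
  have hR0 : R.eval 0 = 0 := by
    rw [hRdef, hGdef]
    simp [hS0, hI0]
  have hRnat : ∀ m : ℕ, R.eval (m : ℚ) = 0 := by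
    intro m
    induction m with
    | zero => simpa using hR0
    | succ m ih =>
      have h := congrArg (Polynomial.eval (m : ℚ)) hΔR
      rw [Polynomial.eval_comp] at h
      simp only [Polynomial.eval_add, Polynomial.eval_X, Polynomial.eval_one] at h
      push_cast
      rw [h, ih]
  have hRzero : R = 0 := by
    apply Polynomial.eq_zero_of_infinite_isRoot
    apply Set.infinite_of_injective_forall_mem (f := (Nat.cast : ℕ → ℚ)) Nat.cast_injective
    intro m
    exact hRnat m
  have hSG : S = G := by
    have h := hRzero
    rw [hRdef, sub_eq_zero] at h
    exact h
  rw [hSG, hGdef]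
  simp only [Polynomial.eval_sub, Polynomial.eval_add, Polynomial.eval_C]
  have hΦeval : ∀ x : ℚ, Φ.eval x = ∑ r ∈ Icc 1 (d+1),
      bernoulli r / (Nat.factorial r : ℚ) * (Polynomial.derivative^[r-1] f).eval x := by
    intro x
    rw [hΦdef, Polynomial.eval_finset_sum]
    apply Finset.sum_congr rfl
    intro r _
    rw [Polynomial.eval_mul, Polynomial.eval_C]
  rw [hΦeval n, hΦeval 0, add_sub_assoc, ← Finset.sum_sub_distrib]
  congr 1
  apply Finset.sum_congr rfl
  intro r _
  ring
end
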